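/- arXiv:1810.11894 — 4 statements merged into one kernel-verified Lean document; each statement's English description precedes it below -/
import Mathlib

section
/- Corollary (quadratic bound via a divergence-free generalized flow). Suppose 𝒦_{ij} : ℝ → ℝ ((i,j) ∈ V × V) are continuous τ-periodic functions that are identically zero when (i,j) ∉ E, satisfying the divergence-free condition Σ_{j∈V} 𝒦_{ij}(t) − Σ_{j∈V} 𝒦_{ji}(t) = 0 for all i and t, and such that K := (1/τ)∫₀^τ Σ_{(i,j)∈V×V} α_{ij}(t)𝒦_{ij}(t) dt ≠ 0. Define σ̂ := 2 Σ_{(i,j)∈E} (1/τ)∫₀^τ 𝒦_{ij}(t)²/𝒬_{ij}(t) dt. Then limsup_{y→y_{α,γ}, y≠y_{α,γ}} I_{α,γ}(y)/(y − y_{α,γ})² ≤ σ̂/(4 K²), where the limsup is taken in [0,∞]. -/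
open MeasureTheory Filter
open scoped Topology ENNReal

/-- The function `Φ(q,p) = q log(q/p) − q + p` on `[0,∞) × [0,∞)` with values in `[0,∞]`,
with the conventions `Φ(0,p) = p` and `Φ(q,0) = ∞` for `q > 0`. -/
noncomputable def Phi (q p : ℝ) : ℝ≥0∞ :=
  if q = 0 then ENNReal.ofReal p
  else if p = 0 then ⊤
  else ENNReal.ofReal (q * Real.log (q / p) - q + p)

lemma log_lower {x : ℝ} (hx : 0 < x) : 1 - x⁻¹ ≤ Real.log x := by
  have h := Real.log_le_sub_one_of_pos (x := x⁻¹) (by positivity)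
  rw [Real.log_inv] at h
  linarith

lemma aux_deriv (c : ℝ) (hc1 : c < 1) {u : ℝ} (hu : -1 < u) :
    HasDerivAt (fun u : ℝ => u ^ 2 / (2 * (1 - c)) - ((1 + u) * Real.log (1 + u) - u))
      (u / (1 - c) - Real.log (1 + u)) u := by
  have h1 : HasDerivAt (fun u : ℝ => 1 + u) 1 u := by
    simpa using (hasDerivAt_id u).const_add 1
  have hne : 1 + u ≠ 0 := by linarith
  have hlog : HasDerivAt (fun u : ℝ => Real.log (1 + u)) (1 / (1 + u)) u := by
    simpa using h1.log hne
  have hmul : HasDerivAt (fun u : ℝ => (1 + u) * Real.log (1 + u))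
      (Real.log (1 + u) + 1) u := by
    have := h1.mul hlog
    have e : 1 * Real.log (1+u) + (1+u) * (1/(1+u)) = Real.log (1+u) + 1 := by
      field_simp
    rw [e] at this; exact this
  have hsq : HasDerivAt (fun u : ℝ => u ^ 2 / (2 * (1 - c))) (u / (1 - c)) u := by
    have := (hasDerivAt_pow 2 u).div_const (2 * (1 - c))
    refine this.congr_deriv ?_
    have : (1:ℝ) - c ≠ 0 := by linarith
    norm_num
    field_simp
  have := hsq.sub (hmul.sub (hasDerivAt_id u))
  exact this.congr_deriv (by ring)

lemma key_log_ineq {c : ℝ} (hc0 : 0 < c) (hc1 : c < 1) {u : ℝ} (hu : |u| ≤ c) :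
    (1 + u) * Real.log (1 + u) - u ≤ u ^ 2 / (2 * (1 - c)) := by
  set φ : ℝ → ℝ := fun u => u ^ 2 / (2 * (1 - c)) - ((1 + u) * Real.log (1 + u) - u) with hφ
  have habs := abs_le.1 hu
  have hgt : ∀ v : ℝ, v ∈ Set.Icc (-c) c → -1 < v := fun v hv => by
    have := hv.1; linarith
  have hd : ∀ v ∈ Set.Icc (-c) c, HasDerivAt φ (v / (1 - c) - Real.log (1 + v)) v :=
    fun v hv => aux_deriv c hc1 (hgt v hv)
  have hcont : ContinuousOn φ (Set.Icc (-c) c) := fun v hv =>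
    ((hd v hv).continuousAt).continuousWithinAt
  have hφ0 : φ 0 = 0 := by simp [hφ]
  have key : 0 ≤ φ u := by
    rcases le_total 0 u with h0u | hu0
    · have hmono : MonotoneOn φ (Set.Icc 0 c) := by
        apply monotoneOn_of_deriv_nonneg (convex_Icc 0 c)
        · exact hcont.mono (Set.Icc_subset_Icc (by linarith) le_rfl)
        · intro v hv
          rw [interior_Icc] at hv
          exact ((hd v ⟨by linarith [hv.1], le_of_lt hv.2⟩)).differentiableAt.differentiableWithinAt
        · intro v hv
          rw [interior_Icc] at hv
          rw [(hd v ⟨by linarith [hv.1], le_of_lt hv.2⟩).deriv]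
          have hlog : Real.log (1 + v) ≤ v := by
            have := Real.log_le_sub_one_of_pos (x := 1 + v) (by linarith [hv.1])
            linarith
          have : v ≤ v / (1 - c) := by
            rw [le_div_iff₀ (by linarith)]
            nlinarith [hv.1]
          linarith
      have := hmono ⟨le_rfl, hc0.le⟩ ⟨h0u, habs.2⟩ h0u
      rw [hφ0] at this; exact this
    · have hanti : AntitoneOn φ (Set.Icc (-c) 0) := by
        apply antitoneOn_of_deriv_nonpos (convex_Icc (-c) 0)
        · exact hcont.mono (Set.Icc_subset_Icc le_rfl hc0.le)
        · intro v hv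
          rw [interior_Icc] at hv
          exact ((hd v ⟨le_of_lt hv.1, by linarith [hv.2]⟩)).differentiableAt.differentiableWithinAt
        · intro v hv
          rw [interior_Icc] at hv
          rw [(hd v ⟨le_of_lt hv.1, by linarith [hv.2]⟩).deriv]
          have h1v : (0:ℝ) < 1 + v := by linarith [hv.1]
          have hlog : v / (1 + v) ≤ Real.log (1 + v) := by
            have := log_lower h1v
            have e : 1 - (1 + v)⁻¹ = v / (1 + v) := by field_simp; ring
            linarith [e ▸ this]
          have h2 : v / (1 - c) ≤ v / (1 + v) := by
            rw [div_le_div_iff₀ (by linarith) h1v]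
            nlinarith [hv.1, hv.2]
          linarith
      have := hanti ⟨habs.1, hu0⟩ ⟨neg_nonpos_of_nonneg hc0.le, le_rfl⟩ hu0
      rw [hφ0] at this; exact this
  simpa [hφ, sub_nonneg] using key

lemma phi_bound {p x c : ℝ} (hp : 0 < p) (hc0 : 0 < c) (hc1 : c < 1) (hx : |x| ≤ c * p) :
    Phi (p + x) p ≤ ENNReal.ofReal (x ^ 2 / (2 * (1 - c) * p)) := by
  have hxp : -x < p := by
    have := (abs_le.1 hx).1
    nlinarith
  have hpx : 0 < p + x := by linarith
  have hu : |x / p| ≤ c := by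
    rw [abs_div, abs_of_pos hp, div_le_iff₀ hp]; linarith [hx]
  have hkey := key_log_ineq hc0 hc1 hu
  rw [Phi]; rw [if_neg hpx.ne', if_neg hp.ne']
  apply ENNReal.ofReal_le_ofReal
  have e1 : (p + x) / p = 1 + x / p := by field_simp
  have e2 : (p + x) * Real.log ((p + x) / p) - (p + x) + p
      = p * ((1 + x / p) * Real.log (1 + x / p) - x / p) := by
    rw [e1]; field_simp; ring
  rw [e2]
  have e3 : x ^ 2 / (2 * (1 - c) * p) = p * ((x / p) ^ 2 / (2 * (1 - c))) := by
    have h1c : (1:ℝ) - c ≠ 0 := by linarith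
    field_simp
  rw [e3]
  exact mul_le_mul_of_nonneg_left hkey hp.le

theorem stmt1
    {V : Type} [Fintype V] [Nonempty V]
    (E : Finset (V × V)) (hE : ∀ i : V, (i, i) ∉ E)
    (τ : ℝ) (hτ : 0 < τ)
    (w : V → V → ℝ → ℝ)
    (hw_cont : ∀ i j, Continuous (w i j))
    (hw_per : ∀ i j, Function.Periodic (w i j) τ)
    (hw_pos : ∀ i j, (i, j) ∈ E → ∀ t, 0 < w i j t)
    (hw_zero : ∀ i j, (i, j) ∉ E → ∀ t, w i j t = 0)
    (pi : V → ℝ → ℝ)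
    (hpi_diff : ∀ i, ContDiff ℝ 1 (pi i))
    (hpi_per : ∀ i, Function.Periodic (pi i) τ)
    (hpi_pos : ∀ i t, 0 < pi i t)
    (hpi_sum : ∀ t : ℝ, ∑ i, pi i t = 1)
    (hpi_cont_eq : ∀ i t, deriv (pi i) t
      + (∑ j, pi i t * w i j t) - (∑ j, pi j t * w j i t) = 0)
    (α : V → V → ℝ → ℝ)
    (hα_cont : ∀ i j, Continuous (α i j))
    (hα_per : ∀ i j, Function.Periodic (α i j) τ)
    (γ : V → ℝ → ℝ)
    (hγ_cont : ∀ i, Continuous (γ i))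
    (hγ_per : ∀ i, Function.Periodic (γ i) τ)
    (y0 : ℝ)
    (hy0 : y0 = (1 / τ) * (∫ t in (0:ℝ)..τ,
      ((∑ i, ∑ j, α i j t * (pi i t * w i j t)) + ∑ i, γ i t * pi i t)))
    (hy0_ne : y0 ≠ 0)
    (Iag : ℝ → ℝ≥0∞)
    (hI : ∀ y : ℝ, Iag y = sInf { c : ℝ≥0∞ |
      ∃ (Q : V → V → ℝ → ℝ) (ρ : V → ℝ → ℝ),
        (∀ i j, Continuous (Q i j)) ∧
        (∀ i j, Function.Periodic (Q i j) τ) ∧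
        (∀ i j t, 0 ≤ Q i j t) ∧
        (∀ i j, (i, j) ∉ E → ∀ t, Q i j t = 0) ∧
        (∀ i, ContDiff ℝ 1 (ρ i)) ∧
        (∀ i, Function.Periodic (ρ i) τ) ∧
        (∀ i t, 0 ≤ ρ i t) ∧
        (∀ t : ℝ, ∑ i, ρ i t = 1) ∧
        (∀ i t, deriv (ρ i) t + (∑ j, Q i j t) - (∑ j, Q j i t) = 0) ∧
        ((1 / τ) * (∫ t in (0:ℝ)..τ,
          ((∑ i, ∑ j, α i j t * Q i j t) + ∑ i, γ i t * ρ i t)) = y) ∧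
        c = ∑ e ∈ E, ENNReal.ofReal (1 / τ) *
          (∫⁻ t in Set.Ioc (0:ℝ) τ, Phi (Q e.1 e.2 t) (ρ e.1 t * w e.1 e.2 t)) })
    -- the divergence-free generalized flow 𝒦
    (K : V → V → ℝ → ℝ)
    (hK_cont : ∀ i j, Continuous (K i j))
    (hK_per : ∀ i j, Function.Periodic (K i j) τ)
    (hK_zero : ∀ i j, (i, j) ∉ E → ∀ t, K i j t = 0)
    (hK_div : ∀ i (t : ℝ), (∑ j, K i j t) - (∑ j, K j i t) = 0)
    (Kav : ℝ)
    (hKav : Kav = (1 / τ) * (∫ t in (0:ℝ)..τ, ∑ i, ∑ j, α i j t * K i j t))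
    (hKav_ne : Kav ≠ 0)
    (σhat : ℝ)
    (hσhat : σhat = 2 * ∑ e ∈ E, (1 / τ) * (∫ t in (0:ℝ)..τ,
      (K e.1 e.2 t) ^ 2 / (pi e.1 t * w e.1 e.2 t))) :
    Filter.limsup (fun y : ℝ => Iag y / ENNReal.ofReal ((y - y0) ^ 2)) (𝓝[≠] y0)
      ≤ ENNReal.ofReal (σhat / (4 * Kav ^ 2)) := by
  classical
  -- a uniform bound |K| ≤ B * 𝒬 on edges
  have hQpos : ∀ e ∈ E, ∀ t : ℝ, 0 < pi e.1 t * w e.1 e.2 t := by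
    intro e he t
    exact mul_pos (hpi_pos _ _) (hw_pos e.1 e.2 (by simpa using he) t)
  obtain ⟨B, hB0, hBK⟩ : ∃ B : ℝ, 0 < B ∧
      ∀ e ∈ E, ∀ t : ℝ, |K e.1 e.2 t| ≤ B * (pi e.1 t * w e.1 e.2 t) := by
    set g : ℝ → ℝ := fun t => ∑ e ∈ E, |K e.1 e.2 t| / (pi e.1 t * w e.1 e.2 t) with hg
    have hg_cont : Continuous g := by
      apply continuous_finset_sum
      intro e he
      exact ((hK_cont e.1 e.2).abs).div
        (((hpi_diff e.1).continuous).mul (hw_cont e.1 e.2))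
        (fun t => (hQpos e he t).ne')
    have hg_per : Function.Periodic g τ := by
      intro t
      apply Finset.sum_congr rfl
      intro e he
      rw [hK_per e.1 e.2 t, hpi_per e.1 t, hw_per e.1 e.2 t]
    obtain ⟨x0, hx0mem, hx0max⟩ := isCompact_Icc.exists_isMaxOn (f := g)
      (Set.nonempty_Icc.2 hτ.le) hg_cont.continuousOn
    have hgB : ∀ t : ℝ, g t ≤ g x0 + 1 := by
      intro t
      obtain ⟨s, hs, hgs⟩ := hg_per.exists_mem_Ico₀ hτ t
      rw [hgs]
      have h2 : g s ≤ g x0 := hx0max ⟨hs.1, hs.2.le⟩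
      linarith
    refine ⟨g x0 + 1, ?_, ?_⟩
    · have : 0 ≤ g x0 := by
        have h0 : (0:ℝ) ∈ Set.Icc (0:ℝ) τ := ⟨le_rfl, hτ.le⟩
        have h2 : g 0 ≤ g x0 := hx0max h0
        refine le_trans ?_ h2
        apply Finset.sum_nonneg
        intro e he
        exact div_nonneg (abs_nonneg _) (hQpos e he 0).le
      linarith
    · intro e he t
      have h1 : |K e.1 e.2 t| / (pi e.1 t * w e.1 e.2 t) ≤ g t := by
        apply Finset.single_le_sum (f := fun e : V × V =>
          |K e.1 e.2 t| / (pi e.1 t * w e.1 e.2 t)) ?_ he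
        intro f hf
        exact div_nonneg (abs_nonneg _) (hQpos f hf t).le
      have := le_trans h1 (hgB t)
      rwa [div_le_iff₀ (hQpos e he t)] at this
  -- σhat is nonnegative
  have hσ_nonneg : 0 ≤ σhat := by
    rw [hσhat]
    apply mul_nonneg (by norm_num)
    apply Finset.sum_nonneg
    intro e he
    apply mul_nonneg (by positivity)
    apply intervalIntegral.integral_nonneg hτ.le
    intro t _
    exact div_nonneg (sq_nonneg _) (hQpos e he t).le
  set A : ℝ := σhat / (4 * Kav ^ 2) with hA
  have hA_nonneg : 0 ≤ A := by
    apply div_nonneg hσ_nonneg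
    positivity
  -- main step: reduce to an ε–room
  apply ENNReal.le_of_forall_pos_le_add
  intro ε' hε' _
  set δ : ℝ := (ε' : ℝ) with hδdef
  have hδ : 0 < δ := hε'
  set κ : ℝ := min (1/2) (δ / (2 * (A + δ))) with hκ
  have hκ0 : 0 < κ := by
    apply lt_min (by norm_num)
    positivity
  have hκ1 : κ < 1 := lt_of_le_of_lt (min_le_left _ _) (by norm_num)
  have hκA : A / (1 - κ) ≤ A + δ := by
    rw [div_le_iff₀ (by linarith)]
    have h2 : κ * (A + δ) ≤ δ / 2 := by
      have : κ ≤ δ / (2 * (A + δ)) := min_le_right _ _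
      calc κ * (A + δ) ≤ (δ / (2 * (A + δ))) * (A + δ) := by
            apply mul_le_mul_of_nonneg_right this (by linarith)
        _ = δ / 2 := by
            field_simp

    nlinarith
  have hgoal_eq : ENNReal.ofReal A + ↑ε' = ENNReal.ofReal (A + δ) := by
    rw [ENNReal.ofReal_add hA_nonneg hδ.le, ENNReal.ofReal_coe_nnreal]
  rw [hgoal_eq]
  -- the eventual bound
  refine Filter.limsup_le_of_le (by isBoundedDefault) ?_
  have hev : ∀ᶠ y in 𝓝 y0, |y - y0| < |Kav| * (κ / B) := by
    filter_upwards [Metric.ball_mem_nhds y0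
      (by positivity : 0 < |Kav| * (κ / B))] with x hx
    rwa [Metric.mem_ball, Real.dist_eq] at hx
  filter_upwards [eventually_nhdsWithin_of_eventually_nhds hev,
    self_mem_nhdsWithin] with y hy hyne
  have hyne' : y ≠ y0 := hyne
  -- the perturbation parameter
  set ε : ℝ := (y - y0) / Kav with hε
  have hεbound : ∀ e ∈ E, ∀ t : ℝ, |ε * K e.1 e.2 t| ≤ κ * (pi e.1 t * w e.1 e.2 t) := by
    intro e he t
    rw [abs_mul]
    have h1 : |ε| ≤ κ / B := by
      rw [hε, abs_div]
      rw [div_le_div_iff₀ (abs_pos.2 hKav_ne) hB0]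
      calc |y - y0| * B ≤ (|Kav| * (κ / B)) * B := by
            apply mul_le_mul_of_nonneg_right hy.le hB0.le
        _ = |Kav| * κ := by field_simp
        _ = κ * |Kav| := mul_comm _ _
    calc |ε| * |K e.1 e.2 t| ≤ (κ / B) * (B * (pi e.1 t * w e.1 e.2 t)) := by
          apply mul_le_mul h1 (hBK e he t) (abs_nonneg _) (by positivity)
      _ = κ * (pi e.1 t * w e.1 e.2 t) := by field_simp
  -- the competitor
  set Qf : V → V → ℝ → ℝ := fun i j t => pi i t * w i j t + ε * K i j t with hQf
  have hQf_zero : ∀ i j, (i, j) ∉ E → ∀ t, Qf i j t = 0 := by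
    intro i j hij t
    simp [hQf, hw_zero i j hij t, hK_zero i j hij t]
  have hQf_nonneg : ∀ i j t, 0 ≤ Qf i j t := by
    intro i j t
    by_cases hij : (i, j) ∈ E
    · have h1 := hεbound (i, j) hij t
      have h2 := hQpos (i, j) hij t
      simp only [hQf]
      have := (abs_le.1 h1).1
      simp only at h2 this ⊢
      nlinarith
    · rw [hQf_zero i j hij t]
  -- membership of the competitor value
  set cval : ℝ≥0∞ := ∑ e ∈ E, ENNReal.ofReal (1 / τ) *
    (∫⁻ t in Set.Ioc (0:ℝ) τ, Phi (Qf e.1 e.2 t) (pi e.1 t * w e.1 e.2 t)) with hcval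
  have hmem : cval ∈ { c : ℝ≥0∞ |
      ∃ (Q : V → V → ℝ → ℝ) (ρ : V → ℝ → ℝ),
        (∀ i j, Continuous (Q i j)) ∧
        (∀ i j, Function.Periodic (Q i j) τ) ∧
        (∀ i j t, 0 ≤ Q i j t) ∧
        (∀ i j, (i, j) ∉ E → ∀ t, Q i j t = 0) ∧
        (∀ i, ContDiff ℝ 1 (ρ i)) ∧
        (∀ i, Function.Periodic (ρ i) τ) ∧
        (∀ i t, 0 ≤ ρ i t) ∧
        (∀ t : ℝ, ∑ i, ρ i t = 1) ∧
        (∀ i t, deriv (ρ i) t + (∑ j, Q i j t) - (∑ j, Q j i t) = 0) ∧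
        ((1 / τ) * (∫ t in (0:ℝ)..τ,
          ((∑ i, ∑ j, α i j t * Q i j t) + ∑ i, γ i t * ρ i t)) = y) ∧
        c = ∑ e ∈ E, ENNReal.ofReal (1 / τ) *
          (∫⁻ t in Set.Ioc (0:ℝ) τ, Phi (Q e.1 e.2 t) (ρ e.1 t * w e.1 e.2 t)) } := by
    refine ⟨Qf, pi, ?_, ?_, hQf_nonneg, hQf_zero, hpi_diff, hpi_per,
      fun i t => (hpi_pos i t).le, hpi_sum, ?_, ?_, rfl⟩
    · intro i j
      exact (((hpi_diff i).continuous).mul (hw_cont i j)).add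
        (continuous_const.mul (hK_cont i j))
    · intro i j t
      simp only [hQf]
      rw [hpi_per i t, hw_per i j t, hK_per i j t]
    · intro i t
      simp only [hQf]
      have e1 : ∑ j, (pi i t * w i j t + ε * K i j t)
          = (∑ j, pi i t * w i j t) + ε * ∑ j, K i j t := by
        rw [Finset.sum_add_distrib, Finset.mul_sum]
      have e2 : ∑ j, (pi j t * w j i t + ε * K j i t)
          = (∑ j, pi j t * w j i t) + ε * ∑ j, K j i t := by
        rw [Finset.sum_add_distrib, Finset.mul_sum]
      rw [e1, e2]
      linear_combination hpi_cont_eq i t + ε * hK_div i t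
    · -- the integral constraint
      have hint1 : IntervalIntegrable
          (fun t => (∑ i, ∑ j, α i j t * (pi i t * w i j t)) + ∑ i, γ i t * pi i t)
          volume 0 τ := by
        apply Continuous.intervalIntegrable
        apply Continuous.add
        · apply continuous_finset_sum; intro i _
          apply continuous_finset_sum; intro j _
          exact (hα_cont i j).mul (((hpi_diff i).continuous).mul (hw_cont i j))
        · apply continuous_finset_sum; intro i _
          exact (hγ_cont i).mul ((hpi_diff i).continuous)
      have hint2 : IntervalIntegrable
          (fun t => ε * ∑ i, ∑ j, α i j t * K i j t) volume 0 τ := by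
        apply Continuous.intervalIntegrable
        apply continuous_const.mul
        apply continuous_finset_sum; intro i _
        apply continuous_finset_sum; intro j _
        exact (hα_cont i j).mul (hK_cont i j)
      have hre : (∫ t in (0:ℝ)..τ,
          ((∑ i, ∑ j, α i j t * Qf i j t) + ∑ i, γ i t * pi i t))
          = (∫ t in (0:ℝ)..τ,
              (((∑ i, ∑ j, α i j t * (pi i t * w i j t)) + ∑ i, γ i t * pi i t)
                + ε * ∑ i, ∑ j, α i j t * K i j t)) := by
        apply intervalIntegral.integral_congr
        intro t _
        simp only [hQf]
        have he : ∀ i j : V, α i j t * (pi i t * w i j t + ε * K i j t)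
            = α i j t * (pi i t * w i j t) + ε * (α i j t * K i j t) := by
          intro i j; ring
        simp only [he, Finset.sum_add_distrib, ← Finset.mul_sum]
        ring
      rw [hre, intervalIntegral.integral_add hint1 hint2,
        intervalIntegral.integral_const_mul, mul_add, ← hy0]
      have : 1 / τ * (ε * ∫ t in (0:ℝ)..τ, ∑ i, ∑ j, α i j t * K i j t) = ε * Kav := by
        rw [hKav]; ring
      rw [this, hε, div_mul_cancel₀ _ hKav_ne]
      ring
  -- bound on the competitor value
  have hedge : ∀ e ∈ E,
      (∫⁻ t in Set.Ioc (0:ℝ) τ, Phi (Qf e.1 e.2 t) (pi e.1 t * w e.1 e.2 t))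
        ≤ ENNReal.ofReal (∫ t in Set.Ioc (0:ℝ) τ,
            (ε * K e.1 e.2 t) ^ 2 / (2 * (1 - κ) * (pi e.1 t * w e.1 e.2 t))) := by
    intro e he
    have hfcont : Continuous (fun t =>
        (ε * K e.1 e.2 t) ^ 2 / (2 * (1 - κ) * (pi e.1 t * w e.1 e.2 t))) := by
      apply Continuous.div
      · exact (continuous_const.mul (hK_cont e.1 e.2)).pow 2
      · exact continuous_const.mul (((hpi_diff e.1).continuous).mul (hw_cont e.1 e.2))
      · intro t
        have := hQpos e he t
        have h1κ : (0:ℝ) < 1 - κ := by linarith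
        positivity
    calc (∫⁻ t in Set.Ioc (0:ℝ) τ, Phi (Qf e.1 e.2 t) (pi e.1 t * w e.1 e.2 t))
        ≤ ∫⁻ t in Set.Ioc (0:ℝ) τ, ENNReal.ofReal
            ((ε * K e.1 e.2 t) ^ 2 / (2 * (1 - κ) * (pi e.1 t * w e.1 e.2 t))) := by
          apply lintegral_mono
          intro t
          exact phi_bound (hQpos e he t) hκ0 hκ1 (hεbound e he t)
      _ = ENNReal.ofReal (∫ t in Set.Ioc (0:ℝ) τ,
            (ε * K e.1 e.2 t) ^ 2 / (2 * (1 - κ) * (pi e.1 t * w e.1 e.2 t))) := by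
          rw [MeasureTheory.ofReal_integral_eq_lintegral_ofReal
            (hfcont.integrableOn_Ioc)
            (Filter.Eventually.of_forall (fun t => by
              have := hQpos e he t
              have h1κ : (0:ℝ) < 1 - κ := by linarith
              positivity))]
  have hcval_le : cval ≤ ENNReal.ofReal ((y - y0) ^ 2 * (A + δ)) := by
    calc cval ≤ ∑ e ∈ E, ENNReal.ofReal (1 / τ) *
        ENNReal.ofReal (∫ t in Set.Ioc (0:ℝ) τ,
          (ε * K e.1 e.2 t) ^ 2 / (2 * (1 - κ) * (pi e.1 t * w e.1 e.2 t))) := by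
          rw [hcval]
          exact Finset.sum_le_sum (fun e he => mul_le_mul_right (hedge e he) _)
      _ = ∑ e ∈ E, ENNReal.ofReal ((1 / τ) * ∫ t in Set.Ioc (0:ℝ) τ,
          (ε * K e.1 e.2 t) ^ 2 / (2 * (1 - κ) * (pi e.1 t * w e.1 e.2 t))) := by
          apply Finset.sum_congr rfl
          intro e he
          rw [ENNReal.ofReal_mul (by positivity)]
      _ = ENNReal.ofReal (∑ e ∈ E, (1 / τ) * ∫ t in Set.Ioc (0:ℝ) τ,
          (ε * K e.1 e.2 t) ^ 2 / (2 * (1 - κ) * (pi e.1 t * w e.1 e.2 t))) := by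
          rw [ENNReal.ofReal_sum_of_nonneg]
          intro e he
          apply mul_nonneg (by positivity)
          apply MeasureTheory.setIntegral_nonneg measurableSet_Ioc
          intro t _
          have := hQpos e he t
          have h1κ : (0:ℝ) < 1 - κ := by linarith
          positivity
      _ ≤ ENNReal.ofReal ((y - y0) ^ 2 * (A + δ)) := by
          apply ENNReal.ofReal_le_ofReal
          have hsum_eq : ∀ e ∈ E, (1 / τ) * (∫ t in Set.Ioc (0:ℝ) τ,
              (ε * K e.1 e.2 t) ^ 2 / (2 * (1 - κ) * (pi e.1 t * w e.1 e.2 t)))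
              = (ε ^ 2 / (2 * (1 - κ))) * ((1 / τ) * ∫ t in (0:ℝ)..τ,
                  (K e.1 e.2 t) ^ 2 / (pi e.1 t * w e.1 e.2 t)) := by
            intro e he
            have hpt : ∀ t : ℝ, (ε * K e.1 e.2 t) ^ 2
                / (2 * (1 - κ) * (pi e.1 t * w e.1 e.2 t))
                = (ε ^ 2 / (2 * (1 - κ))) *
                  ((K e.1 e.2 t) ^ 2 / (pi e.1 t * w e.1 e.2 t)) := by
              intro t
              rw [mul_pow, div_mul_eq_div_div, ← mul_div_assoc, div_mul_eq_mul_div]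
            simp only [hpt]
            rw [MeasureTheory.integral_const_mul, intervalIntegral.integral_of_le hτ.le]
            ring
          rw [Finset.sum_congr rfl hsum_eq, ← Finset.mul_sum]
          have hsig : ∑ e ∈ E, (1 / τ) * (∫ t in (0:ℝ)..τ,
              (K e.1 e.2 t) ^ 2 / (pi e.1 t * w e.1 e.2 t)) = σhat / 2 := by
            rw [hσhat]; ring
          rw [hsig, hε]
          have heq : ((y - y0) / Kav) ^ 2 / (2 * (1 - κ)) * (σhat / 2)
              = (y - y0) ^ 2 * (σhat / (4 * Kav ^ 2) / (1 - κ)) := by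
            rw [div_pow, div_div, div_mul_eq_mul_div, mul_div_assoc, div_div, div_div,
              show (2:ℝ) * (Kav ^ 2 * (2 * (1 - κ))) = 4 * Kav ^ 2 * (1 - κ) from by ring]
          rw [heq, ← hA]
          apply mul_le_mul_of_nonneg_left hκA (sq_nonneg _)
  -- conclude
  have hIle : Iag y ≤ ENNReal.ofReal ((y - y0) ^ 2 * (A + δ)) := by
    rw [hI y]
    exact le_trans (sInf_le hmem) hcval_le
  have hsq : (0:ℝ) < (y - y0) ^ 2 := by
    have : y - y0 ≠ 0 := sub_ne_zero.2 hyne'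
    positivity
  rw [ENNReal.div_le_iff (by simpa using (ENNReal.ofReal_pos.2 hsq).ne') ENNReal.ofReal_ne_top]
  calc Iag y ≤ ENNReal.ofReal ((y - y0) ^ 2 * (A + δ)) := hIle
    _ = ENNReal.ofReal (A + δ) * ENNReal.ofReal ((y - y0) ^ 2) := by
        rw [← ENNReal.ofReal_mul (by linarith), mul_comm]
end

section
/- Corollary (quadratic bound with the constant C(p), generic increments). Let p = (p_i)_{i∈V} be a time-independent probability vector (p_i ≥ 0, Σ_{i∈V} p_i = 1) such that Σ_{i∈V} p_i · (1/τ)∫₀^τ γ_i(t) dt = 0. Define C(p) := 2 Σ_{(i,j)∈E} p_i² · (1/τ)∫₀^τ w_{ij}(t)/π_i(t) dt. Then limsup_{y→y_{α,γ}, y≠y_{α,γ}} I_{α,γ}(y)/(y − y_{α,γ})² ≤ C(p)/(4 y_{α,γ}²), where the limsup is taken in [0,∞]. -/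
open MeasureTheory Filter
open scoped Topology ENNReal

private lemma aux_log {x : ℝ} (hx : |x| ≤ 1/2) :
    x - Real.log (1+x) ≤ x^2/2 + 2*|x|^3 := by
  have h1 : |(-x)| < 1 := by rw [abs_neg]; linarith
  have h := Real.abs_log_sub_add_sum_range_le h1 2
  rw [Finset.sum_range_succ, Finset.sum_range_one] at h
  norm_num at h
  have h2 := (abs_le.mp h).1
  have h3 : |x|^3/(1-|x|) ≤ 2*|x|^3 := by
    rw [div_le_iff₀ (by linarith [abs_nonneg x] : (0:ℝ) < 1 - |x|)]
    nlinarith [pow_nonneg (abs_nonneg x) 3, abs_nonneg x]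
  linarith

set_option maxHeartbeats 1000000 in
theorem stmt2
    {V : Type} [Fintype V] [Nonempty V]
    (E : Finset (V × V)) (hE : ∀ i : V, (i, i) ∉ E)
    (τ : ℝ) (hτ : 0 < τ)
    (w : V → V → ℝ → ℝ)
    (hw_cont : ∀ i j, Continuous (w i j))
    (hw_per : ∀ i j, Function.Periodic (w i j) τ)
    (hw_pos : ∀ i j, (i, j) ∈ E → ∀ t, 0 < w i j t)
    (hw_zero : ∀ i j, (i, j) ∉ E → ∀ t, w i j t = 0)
    (pi : V → ℝ → ℝ)
    (hpi_diff : ∀ i, ContDiff ℝ 1 (pi i))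
    (hpi_per : ∀ i, Function.Periodic (pi i) τ)
    (hpi_pos : ∀ i t, 0 < pi i t)
    (hpi_sum : ∀ t : ℝ, ∑ i, pi i t = 1)
    (hpi_cont_eq : ∀ i t, deriv (pi i) t
      + (∑ j, pi i t * w i j t) - (∑ j, pi j t * w j i t) = 0)
    (α : V → V → ℝ → ℝ)
    (hα_cont : ∀ i j, Continuous (α i j))
    (hα_per : ∀ i j, Function.Periodic (α i j) τ)
    (γ : V → ℝ → ℝ)
    (hγ_cont : ∀ i, Continuous (γ i))
    (hγ_per : ∀ i, Function.Periodic (γ i) τ)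
    (y0 : ℝ)
    (hy0 : y0 = (1 / τ) * (∫ t in (0:ℝ)..τ,
      ((∑ i, ∑ j, α i j t * (pi i t * w i j t)) + ∑ i, γ i t * pi i t)))
    (hy0_ne : y0 ≠ 0)
    (Iag : ℝ → ℝ≥0∞)
    (hI : ∀ y : ℝ, Iag y = sInf { c : ℝ≥0∞ |
      ∃ (Q : V → V → ℝ → ℝ) (ρ : V → ℝ → ℝ),
        (∀ i j, Continuous (Q i j)) ∧
        (∀ i j, Function.Periodic (Q i j) τ) ∧
        (∀ i j t, 0 ≤ Q i j t) ∧
        (∀ i j, (i, j) ∉ E → ∀ t, Q i j t = 0) ∧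
        (∀ i, ContDiff ℝ 1 (ρ i)) ∧
        (∀ i, Function.Periodic (ρ i) τ) ∧
        (∀ i t, 0 ≤ ρ i t) ∧
        (∀ t : ℝ, ∑ i, ρ i t = 1) ∧
        (∀ i t, deriv (ρ i) t + (∑ j, Q i j t) - (∑ j, Q j i t) = 0) ∧
        ((1 / τ) * (∫ t in (0:ℝ)..τ,
          ((∑ i, ∑ j, α i j t * Q i j t) + ∑ i, γ i t * ρ i t)) = y) ∧
        c = ∑ e ∈ E, ENNReal.ofReal (1 / τ) *
          (∫⁻ t in Set.Ioc (0:ℝ) τ, Phi (Q e.1 e.2 t) (ρ e.1 t * w e.1 e.2 t)) })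
    -- the probability vector p
    (p : V → ℝ) (hp_nonneg : ∀ i, 0 ≤ p i) (hp_sum : ∑ i, p i = 1)
    (hp_γ : ∑ i, p i * ((1 / τ) * (∫ t in (0:ℝ)..τ, γ i t)) = 0)
    (Cp : ℝ)
    (hCp : Cp = 2 * ∑ e ∈ E, (p e.1) ^ 2 * ((1 / τ) * (∫ t in (0:ℝ)..τ,
      w e.1 e.2 t / pi e.1 t))) :
    Filter.limsup (fun y : ℝ => Iag y / ENNReal.ofReal ((y - y0) ^ 2)) (𝓝[≠] y0)
      ≤ ENNReal.ofReal (Cp / (4 * y0 ^ 2)) := by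
  -- basic facts
  have hw_nn : ∀ i j t, 0 ≤ w i j t := by
    intro i j t
    by_cases h : (i, j) ∈ E
    · exact (hw_pos i j h t).le
    · exact le_of_eq (hw_zero i j h t).symm
  have hp_le1 : ∀ i, p i ≤ 1 := by
    intro i
    rw [← hp_sum]
    exact Finset.single_le_sum (fun j _ => hp_nonneg j) (Finset.mem_univ i)
  -- uniform lower bound on pi
  obtain ⟨m, hm_pos, hm_le⟩ : ∃ m > 0, ∀ i t, m ≤ pi i t := by
    have hper : ∀ i : V, ∃ mi > 0, ∀ t, mi ≤ pi i t := by
      intro i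
      obtain ⟨t0, _, hmin⟩ := isCompact_Icc.exists_isMinOn (Set.nonempty_Icc.2 hτ.le)
        ((hpi_diff i).continuous.continuousOn (s := Set.Icc 0 τ))
      refine ⟨pi i t0, hpi_pos i t0, fun t => ?_⟩
      obtain ⟨s, hs, he⟩ := (hpi_per i).exists_mem_Ico₀ hτ t
      rw [he]
      exact isMinOn_iff.mp hmin s ⟨hs.1, hs.2.le⟩
    choose mf hmf_pos hmf_le using hper
    refine ⟨Finset.univ.inf' Finset.univ_nonempty mf, ?_, fun i t => ?_⟩
    · exact (Finset.lt_inf'_iff _).2 fun i _ => hmf_pos i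
    · exact le_trans (Finset.inf'_le _ (Finset.mem_univ i)) (hmf_le i t)
  have hm1 : m ≤ 1 := by
    obtain i0 : V := Classical.arbitrary V
    have h1 : pi i0 0 ≤ 1 := by
      rw [← hpi_sum 0]
      exact Finset.single_le_sum (fun j _ => (hpi_pos j 0).le) (Finset.mem_univ i0)
    exact le_trans (hm_le i0 0) h1
  -- the constant K
  set K : ℝ := ∑ e ∈ E, (1/τ) * (∫ t in (0:ℝ)..τ, w e.1 e.2 t) with hK
  -- the key estimate
  have key : ∀ u : ℝ, |u| < m/8 → u ≠ 0 →
      Iag ((1-u)*y0) ≤ ENNReal.ofReal (u^2 * (Cp/(4*(1-u)) + 8 * |u| * K / m ^ 2)) := by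
    intro u hu hu0
    have hu8 : |u| < 1/8 := lt_of_lt_of_le hu (by linarith)
    obtain ⟨hul8, hur8⟩ := abs_lt.mp hu8
    have h1u0 : (0:ℝ) < 1 - u := by linarith
    have h1u : (7:ℝ)/8 < 1 - u := by linarith
    obtain ⟨hul, hur⟩ := abs_lt.mp hu
    have hρ_lb : ∀ i t, m/2 ≤ (1-u) * pi i t + u * p i := by
      intro i t
      have h1 := hm_le i t
      have h2 := hp_nonneg i
      have h3 := hp_le1 i
      nlinarith [mul_nonneg h1u0.le (by linarith : (0:ℝ) ≤ pi i t - m),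
        mul_nonneg (by linarith : (0:ℝ) ≤ u + m/8) h2,
        mul_nonneg (by linarith : (0:ℝ) ≤ m/8) (by linarith : (0:ℝ) ≤ 1 - p i),
        mul_nonneg hm_pos.le (by linarith : (0:ℝ) ≤ 1/8 - u)]
    rw [hI]
    set QQ : V → V → ℝ → ℝ := fun i j t => (1-u) * (pi i t * w i j t) with hQQ
    set ρρ : V → ℝ → ℝ := fun i t => (1-u) * pi i t + u * p i with hρρ
    have hc1 : ∀ i j, Continuous (QQ i j) := by
      intro i j; simp only [hQQ]
      exact continuous_const.mul (((hpi_diff i).continuous).mul (hw_cont i j))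
    have hc2 : ∀ i j, Function.Periodic (QQ i j) τ := by
      intro i j t; simp only [hQQ, hpi_per i t, hw_per i j t]
    have hc3 : ∀ i j t, 0 ≤ QQ i j t := by
      intro i j t; simp only [hQQ]
      exact mul_nonneg (by linarith) (mul_nonneg (hpi_pos i t).le (hw_nn i j t))
    have hc4 : ∀ i j, (i, j) ∉ E → ∀ t, QQ i j t = 0 := by
      intro i j h t; simp only [hQQ, hw_zero i j h t, mul_zero]
    have hc5 : ∀ i, ContDiff ℝ 1 (ρρ i) := by
      intro i; simp only [hρρ]
      exact (contDiff_const.mul (hpi_diff i)).add contDiff_const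
    have hc6 : ∀ i, Function.Periodic (ρρ i) τ := by
      intro i t; simp only [hρρ, hpi_per i t]
    have hc7 : ∀ i t, 0 ≤ ρρ i t := by
      intro i t; simp only [hρρ]
      linarith [hρ_lb i t, hm_pos]
    have hc8 : ∀ t : ℝ, ∑ i, ρρ i t = 1 := by
      intro t; simp only [hρρ]
      rw [Finset.sum_add_distrib, ← Finset.mul_sum, ← Finset.mul_sum, hpi_sum, hp_sum]
      ring
    have hc9 : ∀ i t, deriv (ρρ i) t + (∑ j, QQ i j t) - (∑ j, QQ j i t) = 0 := by
      intro i t; simp only [hρρ, hQQ]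
      have hd : deriv (fun s => (1-u) * pi i s + u * p i) t = (1-u) * deriv (pi i) t := by
        have h1 : HasDerivAt (pi i) (deriv (pi i) t) t :=
          (((hpi_diff i).differentiable one_ne_zero) t).hasDerivAt
        exact ((h1.const_mul ((1:ℝ)-u)).add_const (u * p i)).deriv
      rw [hd]
      rw [show (∑ j, (1-u) * (pi i t * w i j t)) = (1-u) * ∑ j, pi i t * w i j t from
        (Finset.mul_sum _ _ _).symm]
      rw [show (∑ j, (1-u) * (pi j t * w j i t)) = (1-u) * ∑ j, pi j t * w j i t from
        (Finset.mul_sum _ _ _).symm]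
      linear_combination ((1:ℝ)-u) * hpi_cont_eq i t
    have hc10 : (1 / τ) * (∫ t in (0:ℝ)..τ,
        ((∑ i, ∑ j, α i j t * QQ i j t) + ∑ i, γ i t * ρρ i t)) = (1-u)*y0 := by
      have hcont1 : Continuous (fun t =>
          (∑ i, ∑ j, α i j t * (pi i t * w i j t)) + ∑ i, γ i t * pi i t) := by
        refine Continuous.add ?_ ?_
        · exact continuous_finset_sum _ fun i _ => continuous_finset_sum _ fun j _ =>
            (hα_cont i j).mul (((hpi_diff i).continuous).mul (hw_cont i j))
        · exact continuous_finset_sum _ fun i _ => (hγ_cont i).mul ((hpi_diff i).continuous)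
      have hcont2 : Continuous (fun t => ∑ i, γ i t * p i) :=
        continuous_finset_sum _ fun i _ => (hγ_cont i).mul continuous_const
      have hint1 : ∀ t : ℝ, ((∑ i, ∑ j, α i j t * QQ i j t) + ∑ i, γ i t * ρρ i t)
          = (1-u) * ((∑ i, ∑ j, α i j t * (pi i t * w i j t)) + ∑ i, γ i t * pi i t)
            + u * (∑ i, γ i t * p i) := by
        intro t
        simp only [hQQ, hρρ]
        rw [show (∑ i, ∑ j, α i j t * ((1-u) * (pi i t * w i j t)))
            = ∑ i, ∑ j, (1-u) * (α i j t * (pi i t * w i j t)) from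
          Finset.sum_congr rfl fun i _ => Finset.sum_congr rfl fun j _ => by ring]
        rw [show (∑ i, γ i t * ((1-u) * pi i t + u * p i))
            = ∑ i, ((1-u) * (γ i t * pi i t) + u * (γ i t * p i)) from
          Finset.sum_congr rfl fun i _ => by ring]
        rw [Finset.sum_add_distrib]
        rw [show (∑ i, ∑ j, (1-u) * (α i j t * (pi i t * w i j t)))
            = (1-u) * ∑ i, ∑ j, α i j t * (pi i t * w i j t) by
          rw [Finset.mul_sum]
          exact Finset.sum_congr rfl fun i _ => (Finset.mul_sum _ _ _).symm]
        rw [show (∑ i, (1-u) * (γ i t * pi i t)) = (1-u) * ∑ i, γ i t * pi i t from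
          (Finset.mul_sum _ _ _).symm]
        rw [show (∑ i, u * (γ i t * p i)) = u * ∑ i, γ i t * p i from
          (Finset.mul_sum _ _ _).symm]
        ring
      simp only [hint1]
      rw [intervalIntegral.integral_add ((hcont1.intervalIntegrable 0 τ).const_mul _)
        ((hcont2.intervalIntegrable 0 τ).const_mul _),
        intervalIntegral.integral_const_mul, intervalIntegral.integral_const_mul,
        intervalIntegral.integral_finset_sum
          (fun i _ => ((hγ_cont i).intervalIntegrable 0 τ).mul_const _)]
      simp only [intervalIntegral.integral_mul_const]
      have hS : (∑ i, (∫ t in (0:ℝ)..τ, γ i t) * p i) = 0 := by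
        have h1 : (1/τ) * ∑ i, (∫ t in (0:ℝ)..τ, γ i t) * p i
            = ∑ i, p i * ((1 / τ) * (∫ t in (0:ℝ)..τ, γ i t)) := by
          rw [Finset.mul_sum]
          exact Finset.sum_congr rfl fun i _ => by ring
        have h2 : (1/τ) ≠ (0:ℝ) := by positivity
        exact (mul_eq_zero.mp (h1.trans hp_γ)).resolve_left h2
      rw [hS, hy0]
      ring
    refine le_trans (sInf_le (show (∑ e ∈ E, ENNReal.ofReal (1 / τ) *
        (∫⁻ t in Set.Ioc (0:ℝ) τ, Phi (QQ e.1 e.2 t) (ρρ e.1 t * w e.1 e.2 t))) ∈ _ from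
      ⟨QQ, ρρ, hc1, hc2, hc3, hc4, hc5, hc6, hc7, hc8, hc9, hc10, rfl⟩)) ?_
    have hedge : ∀ e ∈ E, ENNReal.ofReal (1 / τ) *
        (∫⁻ t in Set.Ioc (0:ℝ) τ, Phi (QQ e.1 e.2 t) (ρρ e.1 t * w e.1 e.2 t))
        ≤ ENNReal.ofReal ((1/τ) * ((u^2 * (p e.1)^2/(2*(1-u)))
            * (∫ t in (0:ℝ)..τ, w e.1 e.2 t / pi e.1 t)
            + (8 * |u|^3/m^2) * (∫ t in (0:ℝ)..τ, w e.1 e.2 t))) := by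
      rintro ⟨i, j⟩ he
      dsimp only
      have hpt : ∀ t : ℝ, Phi (QQ i j t) (ρρ i t * w i j t)
          ≤ ENNReal.ofReal (w i j t *
            (u^2 * (p i)^2 / (2*((1-u) * pi i t)) + 8 * |u|^3/m^2)) := by
        intro t
        have hπ := hpi_pos i t
        have hW := hw_pos i j he t
        have ha : (0:ℝ) < (1-u) * pi i t := mul_pos h1u0 hπ
        have hab : (0:ℝ) < (1-u) * pi i t + u * p i :=
          lt_of_lt_of_le (by linarith) (hρ_lb i t)
        have ha78 : (7:ℝ)/8*m ≤ (1-u) * pi i t := by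
          nlinarith [mul_nonneg h1u0.le (by linarith [hm_le i t] : (0:ℝ) ≤ pi i t - m),
            mul_nonneg (by linarith : (0:ℝ) ≤ 1 - u - 7/8) hm_pos.le]
        have hb_abs : |u * p i| ≤ |u| := by
          rw [abs_mul, abs_of_nonneg (hp_nonneg i)]
          exact mul_le_of_le_one_right (abs_nonneg u) (hp_le1 i)
        set a : ℝ := (1-u) * pi i t with ha_def
        set b : ℝ := u * p i with hb_def
        have e1 : QQ i j t = a * w i j t := by simp only [hQQ]; rw [ha_def]; ring
        have e2 : ρρ i t * w i j t = (a + b) * w i j t := by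
          simp only [hρρ]; rw [ha_def, hb_def]
        rw [e1, e2]
        have hq0 : a * w i j t ≠ 0 := (mul_pos ha hW).ne'
        have hp0 : (a + b) * w i j t ≠ 0 := (mul_pos hab hW).ne'
        unfold Phi
        rw [if_neg hq0, if_neg hp0]
        apply ENNReal.ofReal_le_ofReal
        have hx : |b/a| ≤ 1/2 := by
          rw [abs_div, abs_of_pos ha, div_le_iff₀ ha]
          linarith [hb_abs, hu, ha78, hm_pos]
        have haux := aux_log hx
        have hlog1 : Real.log (1 + b/a) = Real.log (a+b) - Real.log a := by
          rw [show (1:ℝ) + b/a = (a+b)/a by field_simp, Real.log_div hab.ne' ha.ne']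
        rw [hlog1] at haux
        have hmul := mul_le_mul_of_nonneg_left haux ha.le
        have e3 : a * (b/a - (Real.log (a+b) - Real.log a))
            = b - a * (Real.log (a+b) - Real.log a) := by
          field_simp
        have e4 : a * ((b/a)^2/2 + 2*|b/a|^3) = b^2/(2*a) + 2*|b|^3/a^2 := by
          rw [abs_div, abs_of_pos ha]
          field_simp
        rw [e3, e4] at hmul
        have h6 : 2*|b|^3/a^2 ≤ 8*|u|^3/m^2 := by
          rw [div_le_div_iff₀ (by positivity) (by positivity)]
          have h7 : |b|^3 ≤ |u|^3 := pow_le_pow_left₀ (abs_nonneg b) hb_abs 3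
          have h8 : m/2 ≤ a := by linarith [ha78, hm_pos]
          nlinarith [h7, mul_le_mul h8 h8 (by linarith : (0:ℝ) ≤ m/2) (by linarith : (0:ℝ) ≤ a),
            pow_nonneg (abs_nonneg u) 3, hm_pos, pow_nonneg (abs_nonneg b) 3]
        have hlogq : Real.log (a * w i j t / ((a+b) * w i j t))
            = Real.log a - Real.log (a+b) := by
          rw [mul_div_mul_right _ _ hW.ne', Real.log_div ha.ne' hab.ne']
        rw [hlogq]
        calc a * w i j t * (Real.log a - Real.log (a+b)) - a * w i j t + (a+b) * w i j t
            = w i j t * (b - a * (Real.log (a+b) - Real.log a)) := by ring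
          _ ≤ w i j t * (b^2/(2*a) + 8*|u|^3/m^2) := by
              refine mul_le_mul_of_nonneg_left ?_ (hw_nn i j t)
              linarith [hmul, h6]
          _ = w i j t * (u^2 * (p i)^2 / (2*a) + 8*|u|^3/m^2) := by
              rw [hb_def]; ring
      have hBc : Continuous (fun t => w i j t *
          (u^2 * (p i)^2 / (2*((1-u) * pi i t)) + 8 * |u|^3/m^2)) := by
        refine (hw_cont i j).mul (Continuous.add ?_ continuous_const)
        exact Continuous.div continuous_const
          (continuous_const.mul (continuous_const.mul (hpi_diff i).continuous))
          (fun t => (mul_pos two_pos (mul_pos h1u0 (hpi_pos i t))).ne')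
      have hBnn : ∀ t : ℝ, 0 ≤ w i j t *
          (u^2 * (p i)^2 / (2*((1-u) * pi i t)) + 8 * |u|^3/m^2) := by
        intro t
        have h2a : (0:ℝ) < (1-u) * pi i t := mul_pos h1u0 (hpi_pos i t)
        have h2b : (0:ℝ) ≤ u^2 * (p i)^2 / (2*((1-u) * pi i t)) :=
          div_nonneg (by positivity) (by linarith)
        have h2c : (0:ℝ) ≤ 8 * |u|^3/m^2 := by positivity
        exact mul_nonneg (hw_nn i j t) (by linarith)
      have hwpic : Continuous (fun t => w i j t / pi i t) :=
        Continuous.div (hw_cont i j) (hpi_diff i).continuous (fun t => (hpi_pos i t).ne')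
      calc ENNReal.ofReal (1 / τ) *
            (∫⁻ t in Set.Ioc (0:ℝ) τ, Phi (QQ i j t) (ρρ i t * w i j t))
          ≤ ENNReal.ofReal (1 / τ) * (∫⁻ t in Set.Ioc (0:ℝ) τ,
              ENNReal.ofReal (w i j t *
                (u^2 * (p i)^2 / (2*((1-u) * pi i t)) + 8 * |u|^3/m^2))) :=
            mul_le_mul_right (lintegral_mono fun t => hpt t) _
        _ = ENNReal.ofReal ((1/τ) * (∫ t in Set.Ioc (0:ℝ) τ, (w i j t *
              (u^2 * (p i)^2 / (2*((1-u) * pi i t)) + 8 * |u|^3/m^2)))) := by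
            rw [← MeasureTheory.ofReal_integral_eq_lintegral_ofReal
              ((hBc.intervalIntegrable 0 τ).1) (Filter.Eventually.of_forall hBnn),
              ← ENNReal.ofReal_mul (by positivity)]
        _ ≤ ENNReal.ofReal ((1/τ) * ((u^2 * (p i)^2/(2*(1-u)))
              * (∫ t in (0:ℝ)..τ, w i j t / pi i t)
              + (8 * |u|^3/m^2) * (∫ t in (0:ℝ)..τ, w i j t))) := by
            apply ENNReal.ofReal_le_ofReal
            apply le_of_eq
            congr 1
            rw [← intervalIntegral.integral_of_le hτ.le]
            have hptw : ∀ t : ℝ, w i j t *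
                (u^2 * (p i)^2 / (2*((1-u) * pi i t)) + 8 * |u|^3/m^2)
                = (u^2 * (p i)^2/(2*(1-u))) * (w i j t / pi i t)
                  + (8 * |u|^3/m^2) * w i j t := by
              intro t
              have h3 := (hpi_pos i t).ne'
              field_simp
            simp only [hptw]
            rw [intervalIntegral.integral_add
              ((hwpic.intervalIntegrable 0 τ).const_mul _)
              (((hw_cont i j).intervalIntegrable 0 τ).const_mul _),
              intervalIntegral.integral_const_mul, intervalIntegral.integral_const_mul]
    have hnn : ∀ e ∈ E, (0:ℝ) ≤ (1/τ) * ((u^2 * (p e.1)^2/(2*(1-u)))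
        * (∫ t in (0:ℝ)..τ, w e.1 e.2 t / pi e.1 t)
        + (8 * |u|^3/m^2) * (∫ t in (0:ℝ)..τ, w e.1 e.2 t)) := by
      intro e _
      have hA : (0:ℝ) ≤ ∫ t in (0:ℝ)..τ, w e.1 e.2 t / pi e.1 t :=
        intervalIntegral.integral_nonneg hτ.le
          (fun t _ => div_nonneg (hw_nn e.1 e.2 t) (hpi_pos e.1 t).le)
      have hB : (0:ℝ) ≤ ∫ t in (0:ℝ)..τ, w e.1 e.2 t :=
        intervalIntegral.integral_nonneg hτ.le (fun t _ => hw_nn e.1 e.2 t)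
      have hC1 : (0:ℝ) ≤ u^2 * (p e.1)^2/(2*(1-u)) :=
        div_nonneg (by positivity) (by linarith)
      have hC2 : (0:ℝ) ≤ 8 * |u|^3/m^2 := by positivity
      have h1τ : (0:ℝ) ≤ 1/τ := by positivity
      exact mul_nonneg h1τ (add_nonneg (mul_nonneg hC1 hA) (mul_nonneg hC2 hB))
    calc (∑ e ∈ E, ENNReal.ofReal (1 / τ) *
          (∫⁻ t in Set.Ioc (0:ℝ) τ, Phi (QQ e.1 e.2 t) (ρρ e.1 t * w e.1 e.2 t)))
        ≤ ∑ e ∈ E, ENNReal.ofReal ((1/τ) * ((u^2 * (p e.1)^2/(2*(1-u)))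
            * (∫ t in (0:ℝ)..τ, w e.1 e.2 t / pi e.1 t)
            + (8 * |u|^3/m^2) * (∫ t in (0:ℝ)..τ, w e.1 e.2 t))) :=
          Finset.sum_le_sum hedge
      _ = ENNReal.ofReal (∑ e ∈ E, (1/τ) * ((u^2 * (p e.1)^2/(2*(1-u)))
            * (∫ t in (0:ℝ)..τ, w e.1 e.2 t / pi e.1 t)
            + (8 * |u|^3/m^2) * (∫ t in (0:ℝ)..τ, w e.1 e.2 t))) :=
          (ENNReal.ofReal_sum_of_nonneg hnn).symm
      _ = ENNReal.ofReal (u^2 * (Cp/(4*(1-u)) + 8 * |u| * K / m ^ 2)) := by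
          congr 1
          have hsum : ∑ e ∈ E, (1/τ) * ((u^2 * (p e.1)^2/(2*(1-u)))
              * (∫ t in (0:ℝ)..τ, w e.1 e.2 t / pi e.1 t)
              + (8 * |u|^3/m^2) * (∫ t in (0:ℝ)..τ, w e.1 e.2 t))
              = (u^2/(2*(1-u))) * (∑ e ∈ E, (p e.1)^2
                  * ((1/τ) * (∫ t in (0:ℝ)..τ, w e.1 e.2 t / pi e.1 t)))
                + (8*|u|^3/m^2) * K := by
            rw [hK, Finset.mul_sum, Finset.mul_sum, ← Finset.sum_add_distrib]
            exact Finset.sum_congr rfl fun e _ => by ring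
          rw [hsum, show (∑ e ∈ E, (p e.1)^2
              * ((1/τ) * (∫ t in (0:ℝ)..τ, w e.1 e.2 t / pi e.1 t))) = Cp/2 by
            rw [hCp]; ring]
          have habs3 : |u|^3 = u^2 * |u| := by
            rw [show (3:ℕ) = 2 + 1 from rfl, pow_succ, sq_abs]
          rw [habs3]
          field_simp
          ring
  -- conclusion from the key estimate
  have hy0abs : (0:ℝ) < |y0| := abs_pos.mpr hy0_ne
  set δ : ℝ := |y0| * m / 8 with hδ
  have hδpos : (0:ℝ) < δ := by
    rw [hδ]
    exact div_pos (mul_pos hy0abs hm_pos) (by norm_num)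
  have hev : ∀ᶠ y in 𝓝[≠] y0, Iag y / ENNReal.ofReal ((y - y0) ^ 2)
      ≤ ENNReal.ofReal ((Cp/(4*(1-(y0-y)/y0)) + 8 * |(y0-y)/y0| * K / m ^ 2)/y0^2) := by
    have h1 : ∀ᶠ y in 𝓝[≠] y0, |y - y0| < δ := by
      refine eventually_nhdsWithin_of_eventually_nhds ?_
      have h0 := Metric.ball_mem_nhds y0 hδpos
      filter_upwards [h0] with y hy
      simpa [Real.dist_eq] using hy
    filter_upwards [h1, self_mem_nhdsWithin] with y hy1 hy2
    have hyne : y ≠ y0 := hy2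
    set u : ℝ := (y0 - y)/y0 with hu_def
    have hune : u ≠ 0 := by
      rw [hu_def]
      intro h
      rcases div_eq_zero_iff.mp h with h' | h'
      · exact hyne (by linarith [sub_eq_zero.mp h'])
      · exact hy0_ne h'
    have huabs : |u| < m/8 := by
      rw [hu_def, abs_div, div_lt_iff₀ (abs_pos.mpr hy0_ne)]
      calc |y0 - y| = |y - y0| := abs_sub_comm _ _
        _ < δ := hy1
        _ = m/8 * |y0| := by rw [hδ]; ring
    have hk := key u huabs hune
    have hyy : (1 - u) * y0 = y := by
      rw [hu_def]
      field_simp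
      ring
    rw [hyy] at hk
    have hu2 : (0:ℝ) < u^2 := lt_of_le_of_ne (sq_nonneg u) (Ne.symm (pow_ne_zero 2 hune))
    have hy02 : (0:ℝ) < y0^2 := lt_of_le_of_ne (sq_nonneg y0) (Ne.symm (pow_ne_zero 2 hy0_ne))
    have hsq : (y - y0)^2 = u^2 * y0^2 := by
      rw [hu_def]
      field_simp
      ring
    calc Iag y / ENNReal.ofReal ((y - y0) ^ 2)
        ≤ ENNReal.ofReal (u^2 * (Cp/(4*(1-u)) + 8 * |u| * K / m ^ 2))
          / ENNReal.ofReal ((y - y0) ^ 2) := ENNReal.div_le_div_right hk _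
      _ = ENNReal.ofReal ((u^2 * (Cp/(4*(1-u)) + 8 * |u| * K / m ^ 2)) / (u^2 * y0^2)) := by
          rw [hsq, ← ENNReal.ofReal_div_of_pos (mul_pos hu2 hy02)]
      _ = ENNReal.ofReal ((Cp/(4*(1-u)) + 8 * |u| * K / m ^ 2)/y0^2) := by
          rw [mul_div_mul_left _ _ (pow_ne_zero 2 hune)]
  have htend : Tendsto (fun y : ℝ => ENNReal.ofReal
      ((Cp/(4*(1-(y0-y)/y0)) + 8 * |(y0-y)/y0| * K / m ^ 2)/y0^2)) (𝓝[≠] y0)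
      (𝓝 (ENNReal.ofReal (Cp / (4 * y0 ^ 2)))) := by
    have hb : ContinuousAt (fun y : ℝ => (y0 - y)/y0) y0 :=
      ((continuous_const.sub continuous_id).div_const y0).continuousAt
    have hrc : ContinuousAt (fun y : ℝ =>
        (Cp/(4*(1-(y0-y)/y0)) + 8 * |(y0-y)/y0| * K / m ^ 2)/y0^2) y0 := by
      refine ContinuousAt.div_const ?_ _
      refine ContinuousAt.add ?_ ?_
      · refine ContinuousAt.div continuousAt_const
          (continuousAt_const.mul (continuousAt_const.sub hb)) ?_
        simp
      · exact ContinuousAt.div_const ((continuousAt_const.mul hb.abs).mul continuousAt_const) _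
    have h0 : (fun y : ℝ =>
        (Cp/(4*(1-(y0-y)/y0)) + 8 * |(y0-y)/y0| * K / m ^ 2)/y0^2) y0
        = Cp / (4 * y0 ^ 2) := by
      simp
      rw [div_div]
    have ht := (ENNReal.continuous_ofReal.continuousAt.comp hrc).tendsto
    rw [Function.comp] at ht
    simp only [h0] at ht
    exact ht.mono_left nhdsWithin_le_nhds
  calc Filter.limsup (fun y : ℝ => Iag y / ENNReal.ofReal ((y - y0) ^ 2)) (𝓝[≠] y0)
      ≤ Filter.limsup (fun y : ℝ => ENNReal.ofReal
          ((Cp/(4*(1-(y0-y)/y0)) + 8 * |(y0-y)/y0| * K / m ^ 2)/y0^2)) (𝓝[≠] y0) :=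
        limsup_le_limsup hev
    _ = ENNReal.ofReal (Cp / (4 * y0 ^ 2)) := htend.limsup_eq
end

section
/- Theorem (general method for local quadratic bounds, antisymmetric increments). Suppose Z_{ij} : ℝ → ℝ ((i,j) ∈ V × V) are continuous τ-periodic functions with Z_{ij}(t) = −Z_{ji}(t) for all i,j,t and identically zero when (i,j) ∉ E, and m_i : ℝ → ℝ (i ∈ V) are continuously differentiable τ-periodic functions with Σ_{i∈V} m_i(t) = 0 for all t, satisfying m_i'(t) + Σ_{j∈V} Z_{ij}(t) = 0 for all i and t, together with the normalization (1/τ)∫₀^τ [(1/2)Σ_{(i,j)∈V×V} α_{ij}(t)Z_{ij}(t) + Σ_{i∈V} γ_i(t)m_i(t)] dt = y_{α,γ}. Then limsup_{y→y_{α,γ}, y≠y_{α,γ}} I_{α,γ}(y)/(y − y_{α,γ})² ≤ (1/(4 y_{α,γ}²)) · Σ_{(i,j)∈E} (1/τ)∫₀^τ (Z_{ij}(t) − (m_i(t)w_{ij}(t) − m_j(t)w_{ji}(t)))² / (𝒬_{ij}(t) + 𝒬_{ji}(t)) dt, where the limsup is taken in [0,∞]. -/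
open MeasureTheory Filter
open scoped Topology ENNReal

open Function

lemma aux_log_le {x : ℝ} (hx : 1 ≤ x) : Real.log x ≤ (x^2 - 1)/(2*x) := by
  have hmono : MonotoneOn (fun x : ℝ => x/2 - 2⁻¹ * x⁻¹ - Real.log x) (Set.Ici 1) := by
    apply monotoneOn_of_deriv_nonneg (convex_Ici 1)
    · apply ContinuousOn.sub
      · exact (continuousOn_id.div_const 2).sub
          (continuousOn_const.mul (continuousOn_inv₀.mono (by intro x hx; simp at hx ⊢; linarith)))
      · exact Real.continuousOn_log.mono (by intro x hx; simp at hx ⊢; linarith)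
    · intro x hx
      rw [interior_Ici] at hx
      have hx0 : x ≠ 0 := by simp at hx; positivity
      exact (((hasDerivAt_id x).div_const 2).sub ((hasDerivAt_inv hx0).const_mul 2⁻¹)
        |>.sub (Real.hasDerivAt_log hx0)).differentiableAt.differentiableWithinAt
    · intro x hx
      rw [interior_Ici] at hx
      have hx1 : (1:ℝ) < x := hx
      have hx0 : x ≠ 0 := by positivity
      have hd := (((hasDerivAt_id x).div_const 2).sub ((hasDerivAt_inv hx0).const_mul 2⁻¹)
        |>.sub (Real.hasDerivAt_log hx0)).deriv
      simp only [id_eq] at hd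
      rw [show deriv (fun x : ℝ => x/2 - 2⁻¹ * x⁻¹ - Real.log x) x = _ from hd]
      have : 1/2 - 2⁻¹ * -(x^2)⁻¹ - x⁻¹ = (x-1)^2 / (2*x^2) := by field_simp; ring
      rw [this]; positivity
  have h1 := hmono (by simp : (1:ℝ) ∈ Set.Ici 1) (by exact hx) hx
  simp only [Real.log_one] at h1
  have hx0 : (0:ℝ) < x := by linarith
  have : (x^2 - 1)/(2*x) = x/2 - 2⁻¹ * x⁻¹ := by field_simp
  rw [this]
  norm_num at h1
  linarith

lemma aux_log_ge {u : ℝ} (hu : 1 ≤ u) : u - 1 - (u-1)^2/2 ≤ Real.log u := by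
  have hmono : MonotoneOn (fun u : ℝ => Real.log u - (u-1) + (u-1)^2/2) (Set.Ici 1) := by
    apply monotoneOn_of_deriv_nonneg (convex_Ici 1)
    · apply ContinuousOn.add
      · exact (Real.continuousOn_log.mono (by intro x hx; simp at hx ⊢; linarith)).sub
          (by fun_prop)
      · fun_prop
    · intro x hx
      rw [interior_Ici] at hx
      have hx0 : x ≠ 0 := by simp at hx; positivity
      exact (((Real.hasDerivAt_log hx0).sub ((hasDerivAt_id x).sub_const 1)).add
        ((((hasDerivAt_id x).sub_const 1).pow 2).div_const 2)).differentiableAt.differentiableWithinAt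
    · intro x hx
      rw [interior_Ici] at hx
      have hx1 : (1:ℝ) < x := hx
      have hx0 : x ≠ 0 := by positivity
      have hd := (((Real.hasDerivAt_log hx0).sub ((hasDerivAt_id x).sub_const 1)).add
        ((((hasDerivAt_id x).sub_const 1).pow 2).div_const 2)).deriv
      simp only [id_eq] at hd
      rw [show deriv (fun u : ℝ => Real.log u - (u-1) + (u-1)^2/2) x = _ from hd]
      have : x⁻¹ - 1 + (2 : ℕ) * (x - 1)^(2-1) * 1 / 2 = (x-1)^2/x := by field_simp; ring
      rw [this]; positivity
  have h1 := hmono (by simp : (1:ℝ) ∈ Set.Ici 1) (by exact hu) hu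
  simp only [Real.log_one] at h1
  norm_num at h1
  linarith

lemma Phi_le {q p : ℝ} (hq : 0 < q) (hp : 0 < p) :
    Phi q p ≤ ENNReal.ofReal ((q - p)^2 / (2 * min p q)) := by
  rw [Phi, if_neg hq.ne', if_neg hp.ne']
  apply ENNReal.ofReal_le_ofReal
  rcases le_total p q with hpq | hpq
  · rw [min_eq_left hpq]
    have h1 := aux_log_le (x := q/p) ((one_le_div hp).mpr hpq)
    have h2 : q * Real.log (q/p) ≤ q * (((q/p)^2 - 1)/(2*(q/p))) :=
      mul_le_mul_of_nonneg_left h1 hq.le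
    have h3 : q * (((q/p)^2 - 1)/(2*(q/p))) = (q^2 - p^2)/(2*p) := by
      field_simp
    rw [h3] at h2
    have : (q^2 - p^2)/(2*p) - q + p = (q-p)^2/(2*p) := by field_simp; ring
    linarith
  · rw [min_eq_right hpq]
    have h1 := aux_log_ge (u := p/q) ((one_le_div hq).mpr hpq)
    have hlog : Real.log (q/p) = - Real.log (p/q) := by
      rw [← Real.log_inv]; congr 1; field_simp
    rw [hlog]
    have h2 : q * -Real.log (p/q) ≤ q * -(p/q - 1 - (p/q-1)^2/2) := by
      apply mul_le_mul_of_nonneg_left _ hq.le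
      linarith
    have h3 : q * -(p/q - 1 - (p/q-1)^2/2) = -(p - q) + (p-q)^2/(2*q) := by
      field_simp; ring
    rw [h3] at h2
    have hsq : (q-p)^2 = (p-q)^2 := by ring
    rw [hsq]
    linarith

lemma per_lb {f : ℝ → ℝ} {τ : ℝ} (hτ : 0 < τ) (hc : Continuous f) (hp : Periodic f τ)
    (hpos : ∀ t, 0 < f t) : ∃ c > 0, ∀ t, c ≤ f t := by
  obtain ⟨t0, ht0, hmin⟩ := (isCompact_Icc (a := (0:ℝ)) (b := τ)).exists_isMinOn
    (Set.nonempty_Icc.mpr hτ.le) hc.continuousOn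
  refine ⟨f t0, hpos t0, fun t => ?_⟩
  obtain ⟨y, hy, hfy⟩ := hp.exists_mem_Ico₀ hτ t
  rw [hfy]
  exact hmin (Set.mem_Icc.mpr ⟨hy.1, hy.2.le⟩)

lemma per_ub {f : ℝ → ℝ} {τ : ℝ} (hτ : 0 < τ) (hc : Continuous f) (hp : Periodic f τ) :
    ∃ C > 0, ∀ t, |f t| ≤ C := by
  obtain ⟨t0, ht0, hmax⟩ := (isCompact_Icc (a := (0:ℝ)) (b := τ)).exists_isMaxOn
    (Set.nonempty_Icc.mpr hτ.le) hc.abs.continuousOn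
  refine ⟨|f t0| + 1, by positivity, fun t => ?_⟩
  obtain ⟨y, hy, hfy⟩ := hp.exists_mem_Ico₀ hτ t
  rw [hfy]
  have := hmax (Set.mem_Icc.mpr ⟨hy.1, hy.2.le⟩)
  simp only [Set.mem_setOf_eq] at this
  linarith

lemma finset_lb {ι : Type*} (s : Finset ι) (f : ι → ℝ → ℝ)
    (h : ∀ i ∈ s, ∃ c > 0, ∀ t, c ≤ f i t) : ∃ c > 0, ∀ i ∈ s, ∀ t, c ≤ f i t := by
  classical
  induction s using Finset.induction with
  | empty => exact ⟨1, one_pos, by simp⟩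
  | insert a s' hni ih =>
    obtain ⟨c1, hc1, h1⟩ := h a (Finset.mem_insert_self a s')
    obtain ⟨c2, hc2, h2⟩ := ih (fun i hi => h i (Finset.mem_insert_of_mem hi))
    refine ⟨min c1 c2, lt_min hc1 hc2, fun i hi t => ?_⟩
    rcases Finset.mem_insert.mp hi with rfl | hi
    · exact le_trans (min_le_left _ _) (h1 t)
    · exact le_trans (min_le_right _ _) (h2 i hi t)

lemma finset_ub {ι : Type*} (s : Finset ι) (f : ι → ℝ → ℝ)
    (h : ∀ i ∈ s, ∃ C > 0, ∀ t, |f i t| ≤ C) : ∃ C > 0, ∀ i ∈ s, ∀ t, |f i t| ≤ C := by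
  classical
  induction s using Finset.induction with
  | empty => exact ⟨1, one_pos, by simp⟩
  | insert a s' hni ih =>
    obtain ⟨c1, hc1, h1⟩ := h a (Finset.mem_insert_self a s')
    obtain ⟨c2, hc2, h2⟩ := ih (fun i hi => h i (Finset.mem_insert_of_mem hi))
    refine ⟨max c1 c2, lt_max_of_lt_left hc1, fun i hi t => ?_⟩
    rcases Finset.mem_insert.mp hi with rfl | hi
    · exact le_trans (h1 t) (le_max_left _ _)
    · exact le_trans (h2 i hi t) (le_max_right _ _)
set_option maxHeartbeats 4000000

theorem stmt3
    {V : Type} [Fintype V] [Nonempty V]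
    (E : Finset (V × V)) (hE : ∀ i : V, (i, i) ∉ E)
    (hE_symm : ∀ i j : V, (i, j) ∈ E ↔ (j, i) ∈ E)
    (τ : ℝ) (hτ : 0 < τ)
    (w : V → V → ℝ → ℝ)
    (hw_cont : ∀ i j, Continuous (w i j))
    (hw_per : ∀ i j, Function.Periodic (w i j) τ)
    (hw_pos : ∀ i j, (i, j) ∈ E → ∀ t, 0 < w i j t)
    (hw_zero : ∀ i j, (i, j) ∉ E → ∀ t, w i j t = 0)
    (pi : V → ℝ → ℝ)
    (hpi_diff : ∀ i, ContDiff ℝ 1 (pi i))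
    (hpi_per : ∀ i, Function.Periodic (pi i) τ)
    (hpi_pos : ∀ i t, 0 < pi i t)
    (hpi_sum : ∀ t : ℝ, ∑ i, pi i t = 1)
    (hpi_cont_eq : ∀ i t, deriv (pi i) t
      + (∑ j, pi i t * w i j t) - (∑ j, pi j t * w j i t) = 0)
    (α : V → V → ℝ → ℝ)
    (hα_cont : ∀ i j, Continuous (α i j))
    (hα_per : ∀ i j, Function.Periodic (α i j) τ)
    (hα_anti : ∀ i j (t : ℝ), α i j t = - α j i t)
    (γ : V → ℝ → ℝ)
    (hγ_cont : ∀ i, Continuous (γ i))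
    (hγ_per : ∀ i, Function.Periodic (γ i) τ)
    (y0 : ℝ)
    (hy0 : y0 = (1 / τ) * (∫ t in (0:ℝ)..τ,
      ((∑ i, ∑ j, α i j t * (pi i t * w i j t)) + ∑ i, γ i t * pi i t)))
    (hy0_ne : y0 ≠ 0)
    (Iag : ℝ → ℝ≥0∞)
    (hI : ∀ y : ℝ, Iag y = sInf { c : ℝ≥0∞ |
      ∃ (Q : V → V → ℝ → ℝ) (ρ : V → ℝ → ℝ),
        (∀ i j, Continuous (Q i j)) ∧
        (∀ i j, Function.Periodic (Q i j) τ) ∧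
        (∀ i j t, 0 ≤ Q i j t) ∧
        (∀ i j, (i, j) ∉ E → ∀ t, Q i j t = 0) ∧
        (∀ i, ContDiff ℝ 1 (ρ i)) ∧
        (∀ i, Function.Periodic (ρ i) τ) ∧
        (∀ i t, 0 ≤ ρ i t) ∧
        (∀ t : ℝ, ∑ i, ρ i t = 1) ∧
        (∀ i t, deriv (ρ i) t + (∑ j, Q i j t) - (∑ j, Q j i t) = 0) ∧
        ((1 / τ) * (∫ t in (0:ℝ)..τ,
          ((∑ i, ∑ j, α i j t * Q i j t) + ∑ i, γ i t * ρ i t)) = y) ∧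
        c = ∑ e ∈ E, ENNReal.ofReal (1 / τ) *
          (∫⁻ t in Set.Ioc (0:ℝ) τ, Phi (Q e.1 e.2 t) (ρ e.1 t * w e.1 e.2 t)) })
    -- the legal input (Z, m)
    (Z : V → V → ℝ → ℝ)
    (hZ_cont : ∀ i j, Continuous (Z i j))
    (hZ_per : ∀ i j, Function.Periodic (Z i j) τ)
    (hZ_anti : ∀ i j (t : ℝ), Z i j t = - Z j i t)
    (hZ_zero : ∀ i j, (i, j) ∉ E → ∀ t, Z i j t = 0)
    (m : V → ℝ → ℝ)
    (hm_diff : ∀ i, ContDiff ℝ 1 (m i))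
    (hm_per : ∀ i, Function.Periodic (m i) τ)
    (hm_sum : ∀ t : ℝ, ∑ i, m i t = 0)
    (hm_cont_eq : ∀ i (t : ℝ), deriv (m i) t + (∑ j, Z i j t) = 0)
    (h_norm : (1 / τ) * (∫ t in (0:ℝ)..τ,
      ((1 / 2) * (∑ i, ∑ j, α i j t * Z i j t) + ∑ i, γ i t * m i t)) = y0) :
    Filter.limsup (fun y : ℝ => Iag y / ENNReal.ofReal ((y - y0) ^ 2)) (𝓝[≠] y0)
      ≤ ENNReal.ofReal ((1 / (4 * y0 ^ 2)) *
          ∑ e ∈ E, (1 / τ) * (∫ t in (0:ℝ)..τ,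
            (Z e.1 e.2 t - (m e.1 t * w e.1 e.2 t - m e.2 t * w e.2 e.1 t)) ^ 2
              / (pi e.1 t * w e.1 e.2 t + pi e.2 t * w e.2 e.1 t))) := by  classical
  have hpi_cont : ∀ i, Continuous (pi i) := fun i => (hpi_diff i).continuous
  have hm_cont : ∀ i, Continuous (m i) := fun i => (hm_diff i).continuous
  have hS_pos : ∀ i j, (i, j) ∈ E → ∀ t, 0 < pi i t * w i j t + pi j t * w j i t := by
    intro i j h t
    have h' := (hE_symm i j).mp h
    have h1 := mul_pos (hpi_pos i t) (hw_pos i j h t)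
    have h2 := mul_pos (hpi_pos j t) (hw_pos j i h' t)
    linarith
  set q : V → V → ℝ → ℝ := fun i j t =>
    if (i, j) ∈ E then
      m i t * w i j t + (Z i j t - (m i t * w i j t - m j t * w j i t)) *
        (pi i t * w i j t) / (pi i t * w i j t + pi j t * w j i t)
    else 0 with hq_def
  have hq_cont : ∀ i j, Continuous (q i j) := by
    intro i j
    simp only [hq_def]
    by_cases h : (i, j) ∈ E
    · simp only [if_pos h]
      exact ((hm_cont i).mul (hw_cont i j)).add
        (Continuous.div (by fun_prop) (by fun_prop) (fun t => (hS_pos i j h t).ne'))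
    · simp only [if_neg h]; exact continuous_const
  have hq_per : ∀ i j, Function.Periodic (q i j) τ := by
    intro i j t
    simp only [hq_def]
    by_cases h : (i, j) ∈ E
    · simp only [if_pos h, hm_per i t, hw_per i j t, hZ_per i j t, hm_per j t,
        hw_per j i t, hpi_per i t, hpi_per j t]
    · simp only [if_neg h]
  have hq_sub : ∀ i j t, q i j t - q j i t = Z i j t := by
    intro i j t
    by_cases h : (i, j) ∈ E
    · have h' := (hE_symm i j).mp h
      simp only [hq_def, if_pos h, if_pos h']
      have hS := (hS_pos i j h t).ne'
      have hS' := (hS_pos j i h' t).ne'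
      rw [hZ_anti j i t, add_comm (pi j t * w j i t)]
      linear_combination (Z i j t - m i t * w i j t + m j t * w j i t) * mul_inv_cancel₀ hS
    · have h' : (j, i) ∉ E := fun hh => h ((hE_symm j i).mp hh)
      simp [hq_def, h, h', hZ_zero i j h t]
  obtain ⟨cQ, hcQ0, hcQ⟩ := finset_lb E (fun e t => pi e.1 t * w e.1 e.2 t)
    (fun e he => per_lb hτ ((hpi_cont e.1).mul (hw_cont e.1 e.2))
      (fun t => by simp only [hpi_per e.1 t, hw_per e.1 e.2 t])
      (fun t => mul_pos (hpi_pos e.1 t) (hw_pos e.1 e.2 he t)))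
  obtain ⟨cp, hcp0, hcp⟩ := finset_lb (Finset.univ : Finset V) (fun i t => pi i t)
    (fun i _ => per_lb hτ (hpi_cont i) (hpi_per i) (hpi_pos i))
  obtain ⟨C1, hC10, hC1⟩ := finset_ub (Finset.univ : Finset (V × V)) (fun e t => q e.1 e.2 t)
    (fun e _ => per_ub hτ (hq_cont e.1 e.2) (hq_per e.1 e.2))
  obtain ⟨C2, hC20, hC2⟩ := finset_ub (Finset.univ : Finset (V × V))
    (fun e t => m e.1 t * w e.1 e.2 t)
    (fun e _ => per_ub hτ ((hm_cont e.1).mul (hw_cont e.1 e.2))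
      (fun t => by simp only [hm_per e.1 t, hw_per e.1 e.2 t]))
  obtain ⟨C3, hC30, hC3⟩ := finset_ub (Finset.univ : Finset V) (fun i t => m i t)
    (fun i _ => per_ub hτ (hm_cont i) (hm_per i))
  set C : ℝ := C1 + C2 + C3 with hC_def
  have hC0 : 0 < C := by positivity
  have hqC : ∀ i j t, |q i j t| ≤ C := fun i j t =>
    le_trans (hC1 (i, j) (Finset.mem_univ _) t) (by simp only [hC_def]; linarith)
  have hmwC : ∀ i j t, |m i t * w i j t| ≤ C := fun i j t =>
    le_trans (hC2 (i, j) (Finset.mem_univ _) t) (by simp only [hC_def]; linarith)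
  have hmC : ∀ i t, |m i t| ≤ C := fun i t =>
    le_trans (hC3 i (Finset.mem_univ _) t) (by simp only [hC_def]; linarith)
  set δ0 : ℝ := min (cQ / (2 * C)) (cp / (2 * C)) with hδ0_def
  have hδ00 : 0 < δ0 := lt_min (by positivity) (by positivity)
  have hkey : ∀ δ : ℝ, |δ| ≤ δ0 → ∀ (a b c' : ℝ), 0 < c' → δ0 ≤ c' / (2 * C) →
      c' ≤ a → |b| ≤ C → c' / 2 ≤ a + δ * b := by
    intro δ hδ a b c' hc' hle ha hb
    have h1 : |δ * b| ≤ δ0 * C := by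
      rw [abs_mul]; exact mul_le_mul hδ hb (abs_nonneg b) hδ00.le
    have h2 : δ0 * C ≤ c' / 2 := by
      have h3 := mul_le_mul_of_nonneg_right hle hC0.le
      have h4 : c' / (2 * C) * C = c' / 2 := by field_simp
      linarith
    have h5 := (abs_le.mp h1).1
    nlinarith [ha, h2, h5]
  -- the main membership bound
  have hmem : ∀ δ : ℝ, |δ| ≤ δ0 → Iag (y0 * (1 + δ)) ≤
      ∑ e ∈ E, ENNReal.ofReal (1 / τ) *
        (∫⁻ t in Set.Ioc (0:ℝ) τ, Phi (pi e.1 t * w e.1 e.2 t + δ * q e.1 e.2 t)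
          ((pi e.1 t + δ * m e.1 t) * w e.1 e.2 t)) := by
    intro δ hδ
    rw [hI]
    apply sInf_le
    simp only [Set.mem_setOf_eq]
    refine ⟨fun i j t => pi i t * w i j t + δ * q i j t, fun i t => pi i t + δ * m i t,
      ?_, ?_, ?_, ?_, ?_, ?_, ?_, ?_, ?_, ?_, rfl⟩
    · intro i j
      exact ((hpi_cont i).mul (hw_cont i j)).add (continuous_const.mul (hq_cont i j))
    · intro i j t
      simp only [hpi_per i t, hw_per i j t, hq_per i j t]
    · intro i j t
      beta_reduce
      by_cases h : (i, j) ∈ E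
      · have := hkey δ hδ (pi i t * w i j t) (q i j t) cQ hcQ0 (min_le_left _ _)
          (hcQ (i, j) h t) (hqC i j t)
        linarith
      · simp [hq_def, h, hw_zero i j h t]
    · intro i j h t
      simp [hq_def, h, hw_zero i j h t]
    · intro i
      exact (hpi_diff i).add (contDiff_const.mul (hm_diff i))
    · intro i t
      simp only [hpi_per i t, hm_per i t]
    · intro i t
      beta_reduce
      have := hkey δ hδ (pi i t) (m i t) cp hcp0 (min_le_right _ _)
        (hcp i (Finset.mem_univ _) t) (hmC i t)
      linarith
    · intro t
      rw [Finset.sum_add_distrib, hpi_sum, ← Finset.mul_sum, hm_sum, mul_zero, add_zero]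
    · intro i t
      have hd1 : DifferentiableAt ℝ (pi i) t :=
        ((hpi_diff i).differentiable (by norm_num)).differentiableAt
      have hd2 : DifferentiableAt ℝ (m i) t :=
        ((hm_diff i).differentiable (by norm_num)).differentiableAt
      have hder : deriv (fun s => pi i s + δ * m i s) t
          = deriv (pi i) t + δ * deriv (m i) t := by
        rw [show (fun s => pi i s + δ * m i s) = (pi i + fun y => δ * m i y) from rfl,
          deriv_add hd1 (hd2.const_mul δ), deriv_const_mul δ hd2]
      rw [hder]
      have e1 := hpi_cont_eq i t
      have e2 := hm_cont_eq i t
      have e3 : ∑ j, q i j t - ∑ j, q j i t = ∑ j, Z i j t := by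
        rw [← Finset.sum_sub_distrib]
        exact Finset.sum_congr rfl fun j _ => hq_sub i j t
      have e4 : ∑ j, (pi i t * w i j t + δ * q i j t)
          = (∑ j, pi i t * w i j t) + δ * ∑ j, q i j t := by
        rw [Finset.mul_sum, ← Finset.sum_add_distrib]
      have e5 : ∑ j, (pi j t * w j i t + δ * q j i t)
          = (∑ j, pi j t * w j i t) + δ * ∑ j, q j i t := by
        rw [Finset.mul_sum, ← Finset.sum_add_distrib]
      beta_reduce
      rw [e4, e5]
      linear_combination e1 + δ * e2 + δ * e3
    · -- the constraint value
      have hαq : ∀ t, ∑ i, ∑ j, α i j t * q i j t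
          = (1 / 2) * ∑ i, ∑ j, α i j t * Z i j t := by
        intro t
        have hswap : ∑ i, ∑ j, α i j t * q i j t = ∑ i, ∑ j, α j i t * q j i t :=
          Finset.sum_comm
        have h2 : ∑ i, ∑ j, (α i j t * q i j t + α j i t * q j i t)
            = ∑ i, ∑ j, α i j t * Z i j t := by
          refine Finset.sum_congr rfl fun i _ => Finset.sum_congr rfl fun j _ => ?_
          rw [hα_anti j i t, ← hq_sub i j t]; ring
        have h3 : ∑ i, ∑ j, (α i j t * q i j t + α j i t * q j i t)
            = ∑ i, ∑ j, α i j t * q i j t + ∑ i, ∑ j, α j i t * q j i t := by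
          simp [Finset.sum_add_distrib]
        rw [h3, ← hswap] at h2
        linarith
      have hint : ∀ t : ℝ, (∑ i, ∑ j, α i j t * (pi i t * w i j t + δ * q i j t))
          + ∑ i, γ i t * (pi i t + δ * m i t)
          = (((∑ i, ∑ j, α i j t * (pi i t * w i j t)) + ∑ i, γ i t * pi i t)
            + δ * ((1 / 2) * (∑ i, ∑ j, α i j t * Z i j t) + ∑ i, γ i t * m i t)) := by
        intro t
        have eA : ∑ i, ∑ j, α i j t * (pi i t * w i j t + δ * q i j t)
            = (∑ i, ∑ j, α i j t * (pi i t * w i j t))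
              + δ * ∑ i, ∑ j, α i j t * q i j t := by
          rw [Finset.mul_sum, ← Finset.sum_add_distrib]
          refine Finset.sum_congr rfl fun i _ => ?_
          rw [Finset.mul_sum, ← Finset.sum_add_distrib]
          refine Finset.sum_congr rfl fun j _ => ?_
          ring
        have eB : ∑ i, γ i t * (pi i t + δ * m i t)
            = (∑ i, γ i t * pi i t) + δ * ∑ i, γ i t * m i t := by
          rw [Finset.mul_sum, ← Finset.sum_add_distrib]
          refine Finset.sum_congr rfl fun i _ => ?_
          ring
        rw [eA, eB, hαq t]
        ring
      have hf_cont : Continuous (fun t =>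
          (∑ i, ∑ j, α i j t * (pi i t * w i j t)) + ∑ i, γ i t * pi i t) := by
        apply Continuous.add
        · exact continuous_finset_sum _ fun i _ => continuous_finset_sum _ fun j _ =>
            (hα_cont i j).mul ((hpi_cont i).mul (hw_cont i j))
        · exact continuous_finset_sum _ fun i _ => (hγ_cont i).mul (hpi_cont i)
      have hg_cont : Continuous (fun t =>
          (1 / 2) * (∑ i, ∑ j, α i j t * Z i j t) + ∑ i, γ i t * m i t) := by
        apply Continuous.add
        · exact continuous_const.mul (continuous_finset_sum _ fun i _ =>
            continuous_finset_sum _ fun j _ => (hα_cont i j).mul (hZ_cont i j))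
        · exact continuous_finset_sum _ fun i _ => (hγ_cont i).mul (hm_cont i)
      have hEq : (∫ t in (0:ℝ)..τ, ((∑ i, ∑ j, α i j t * (pi i t * w i j t + δ * q i j t))
            + ∑ i, γ i t * (pi i t + δ * m i t)))
          = ∫ t in (0:ℝ)..τ,
            ((((∑ i, ∑ j, α i j t * (pi i t * w i j t)) + ∑ i, γ i t * pi i t)
            + δ * ((1 / 2) * (∑ i, ∑ j, α i j t * Z i j t) + ∑ i, γ i t * m i t))) :=
        intervalIntegral.integral_congr (fun t _ => hint t)
      rw [hEq, intervalIntegral.integral_add (hf_cont.intervalIntegrable 0 τ)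
        ((hg_cont.intervalIntegrable 0 τ).const_mul δ),
        intervalIntegral.integral_const_mul]
      have h1 : (∫ t in (0:ℝ)..τ,
          ((∑ i, ∑ j, α i j t * (pi i t * w i j t)) + ∑ i, γ i t * pi i t)) = τ * y0 := by
        rw [hy0]; field_simp
      have h2 : (∫ t in (0:ℝ)..τ,
          ((1 / 2) * (∑ i, ∑ j, α i j t * Z i j t) + ∑ i, γ i t * m i t)) = τ * y0 := by
        rw [← h_norm]; field_simp
      rw [h1, h2]
      field_simp
    -- half-bound on the relative perturbation
  have hhalf : ∀ δ : ℝ, |δ| ≤ δ0 → |δ| * C / cQ ≤ 1 / 2 := by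
    intro δ hδ
    have h3 := mul_le_mul_of_nonneg_right (le_trans hδ (min_le_left _ _)) hC0.le
    have h4 : cQ / (2 * C) * C = cQ / 2 := by field_simp
    exact (div_le_iff₀ hcQ0).mpr (by linarith)
  have hfac : ∀ δ : ℝ, |δ| ≤ δ0 → 0 < 1 - |δ| * C / cQ := by
    intro δ hδ
    have h5 := hhalf δ hδ
    have h6 : 0 ≤ |δ| * C / cQ := by positivity
    linarith
  -- the quadratic comparison function
  set g : V × V → ℝ → ℝ := fun e t =>
    (q e.1 e.2 t - m e.1 t * w e.1 e.2 t) ^ 2 / (2 * (pi e.1 t * w e.1 e.2 t)) with hg_def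
  -- pointwise bound on Phi
  have hptw : ∀ δ : ℝ, |δ| ≤ δ0 → ∀ e ∈ E, ∀ t : ℝ,
      Phi (pi e.1 t * w e.1 e.2 t + δ * q e.1 e.2 t) ((pi e.1 t + δ * m e.1 t) * w e.1 e.2 t)
        ≤ ENNReal.ofReal ((1 - |δ| * C / cQ)⁻¹ * (δ ^ 2 * g e t)) := by
    intro δ hδ e he t
    obtain ⟨i, j⟩ := e
    have hQ0c : cQ ≤ pi i t * w i j t := hcQ (i, j) he t
    have hQ0pos : 0 < pi i t * w i j t := lt_of_lt_of_le hcQ0 hQ0c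
    have hq' : cQ / 2 ≤ pi i t * w i j t + δ * q i j t :=
      hkey δ hδ _ _ cQ hcQ0 (min_le_left _ _) hQ0c (hqC i j t)
    have hp : cQ / 2 ≤ pi i t * w i j t + δ * (m i t * w i j t) :=
      hkey δ hδ _ _ cQ hcQ0 (min_le_left _ _) hQ0c (hmwC i j t)
    have hpeq : (pi i t + δ * m i t) * w i j t
        = pi i t * w i j t + δ * (m i t * w i j t) := by ring
    rw [hpeq]
    have h1 := Phi_le (q := pi i t * w i j t + δ * q i j t)
      (p := pi i t * w i j t + δ * (m i t * w i j t))
      (lt_of_lt_of_le (by positivity) hq') (lt_of_lt_of_le (by positivity) hp)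
    refine le_trans h1 (ENNReal.ofReal_le_ofReal ?_)
    have hfac' := hfac δ hδ
    have hb : ∀ b : ℝ, |b| ≤ C →
        (pi i t * w i j t) * (1 - |δ| * C / cQ) ≤ pi i t * w i j t + δ * b := by
      intro b hbC
      have h1' : |δ * b| ≤ |δ| * C := by
        rw [abs_mul]; exact mul_le_mul_of_nonneg_left hbC (abs_nonneg δ)
      have hy' : 0 ≤ |δ| * C / cQ := by positivity
      have h2' := mul_le_mul_of_nonneg_right hQ0c hy'
      have hc' : cQ * (|δ| * C / cQ) = |δ| * C := by field_simp
      have h3' := (abs_le.mp h1').1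
      have hexp : (pi i t * w i j t) * (1 - |δ| * C / cQ)
          = pi i t * w i j t - (pi i t * w i j t) * (|δ| * C / cQ) := by ring
      nlinarith [h2', hc', h3', hexp]
    have hmin : (pi i t * w i j t) * (1 - |δ| * C / cQ)
        ≤ min (pi i t * w i j t + δ * (m i t * w i j t)) (pi i t * w i j t + δ * q i j t) :=
      le_min (hb _ (hmwC i j t)) (hb _ (hqC i j t))
    have hnum : (pi i t * w i j t + δ * q i j t
        - (pi i t * w i j t + δ * (m i t * w i j t))) ^ 2
        = δ ^ 2 * (q i j t - m i t * w i j t) ^ 2 := by ring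
    rw [hnum]
    have hgv : g (i, j) t = (q i j t - m i t * w i j t) ^ 2 / (2 * (pi i t * w i j t)) := rfl
    rw [hgv]
    have hminpos : 0 < (pi i t * w i j t) * (1 - |δ| * C / cQ) := mul_pos hQ0pos hfac'
    have hstep : δ ^ 2 * (q i j t - m i t * w i j t) ^ 2
          / (2 * min (pi i t * w i j t + δ * (m i t * w i j t))
              (pi i t * w i j t + δ * q i j t))
        ≤ δ ^ 2 * (q i j t - m i t * w i j t) ^ 2
          / (2 * ((pi i t * w i j t) * (1 - |δ| * C / cQ))) :=
      div_le_div_of_nonneg_left (by positivity) (by linarith) (by linarith)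
    refine le_trans hstep (le_of_eq ?_)
    have hQne : pi i t * w i j t ≠ 0 := hQ0pos.ne'
    have hfne : 1 - |δ| * C / cQ ≠ 0 := hfac'.ne'
    field_simp [hQne, hfne]
  -- continuity / integrability facts for g
  have hg_contE : ∀ e ∈ E, Continuous (g e) := by
    intro e he
    simp only [hg_def]
    apply Continuous.div
    · exact ((hq_cont e.1 e.2).sub ((hm_cont e.1).mul (hw_cont e.1 e.2))).pow 2
    · exact continuous_const.mul ((hpi_cont e.1).mul (hw_cont e.1 e.2))
    · intro t
      have h1 := mul_pos (hpi_pos e.1 t) (hw_pos e.1 e.2 he t)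
      exact (by linarith : (0:ℝ) < 2 * (pi e.1 t * w e.1 e.2 t)).ne'
  have hg_nonneg : ∀ e ∈ E, ∀ t, 0 ≤ g e t := by
    intro e he t
    have h1 := mul_pos (hpi_pos e.1 t) (hw_pos e.1 e.2 he t)
    simp only [hg_def]
    exact div_nonneg (sq_nonneg _) (by linarith)
  have hglint : ∀ e ∈ E, (∫⁻ t in Set.Ioc (0:ℝ) τ, ENNReal.ofReal (g e t))
      = ENNReal.ofReal (∫ t in (0:ℝ)..τ, g e t) := by
    intro e he
    rw [intervalIntegral.integral_of_le hτ.le]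
    exact (ofReal_integral_eq_lintegral_ofReal ((hg_contE e he).integrableOn_Ioc)
      (Filter.Eventually.of_forall (hg_nonneg e he))).symm
  have hIg : ∀ e ∈ E, 0 ≤ ∫ t in (0:ℝ)..τ, g e t :=
    fun e he => intervalIntegral.integral_nonneg hτ.le fun t _ => hg_nonneg e he t
  set Bsum : ℝ := ∑ e ∈ E, (1 / τ) * ∫ t in (0:ℝ)..τ, g e t with hB_def
  -- bound on the total cost
  have hF : ∀ δ : ℝ, |δ| ≤ δ0 →
      (∑ e ∈ E, ENNReal.ofReal (1 / τ) *
        (∫⁻ t in Set.Ioc (0:ℝ) τ, Phi (pi e.1 t * w e.1 e.2 t + δ * q e.1 e.2 t)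
          ((pi e.1 t + δ * m e.1 t) * w e.1 e.2 t)))
        ≤ ENNReal.ofReal ((1 - |δ| * C / cQ)⁻¹ * (δ ^ 2 * Bsum)) := by
    intro δ hδ
    have hK : 0 ≤ (1 - |δ| * C / cQ)⁻¹ * δ ^ 2 :=
      mul_nonneg (inv_pos.mpr (hfac δ hδ)).le (sq_nonneg δ)
    calc (∑ e ∈ E, ENNReal.ofReal (1 / τ) *
        (∫⁻ t in Set.Ioc (0:ℝ) τ, Phi (pi e.1 t * w e.1 e.2 t + δ * q e.1 e.2 t)
          ((pi e.1 t + δ * m e.1 t) * w e.1 e.2 t)))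
        ≤ ∑ e ∈ E, ENNReal.ofReal (1 / τ) *
            (ENNReal.ofReal ((1 - |δ| * C / cQ)⁻¹ * δ ^ 2)
              * ENNReal.ofReal (∫ t in (0:ℝ)..τ, g e t)) := by
          apply Finset.sum_le_sum
          intro e he
          apply mul_le_mul_right
          calc (∫⁻ t in Set.Ioc (0:ℝ) τ, Phi (pi e.1 t * w e.1 e.2 t + δ * q e.1 e.2 t)
              ((pi e.1 t + δ * m e.1 t) * w e.1 e.2 t))
              ≤ ∫⁻ t in Set.Ioc (0:ℝ) τ,
                  ENNReal.ofReal ((1 - |δ| * C / cQ)⁻¹ * (δ ^ 2 * g e t)) :=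
                lintegral_mono fun t => hptw δ hδ e he t
            _ = ∫⁻ t in Set.Ioc (0:ℝ) τ,
                  ENNReal.ofReal ((1 - |δ| * C / cQ)⁻¹ * δ ^ 2) * ENNReal.ofReal (g e t) := by
                congr 1
                funext t
                rw [← ENNReal.ofReal_mul hK]
                congr 1
                ring
            _ = ENNReal.ofReal ((1 - |δ| * C / cQ)⁻¹ * δ ^ 2)
                  * ∫⁻ t in Set.Ioc (0:ℝ) τ, ENNReal.ofReal (g e t) :=
                lintegral_const_mul' _ _ ENNReal.ofReal_ne_top
            _ = ENNReal.ofReal ((1 - |δ| * C / cQ)⁻¹ * δ ^ 2)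
                  * ENNReal.ofReal (∫ t in (0:ℝ)..τ, g e t) := by rw [hglint e he]
      _ = ∑ e ∈ E, ENNReal.ofReal ((1 / τ) * (((1 - |δ| * C / cQ)⁻¹ * δ ^ 2)
            * (∫ t in (0:ℝ)..τ, g e t))) := by
          refine Finset.sum_congr rfl fun e he => ?_
          rw [ENNReal.ofReal_mul (by positivity : (0:ℝ) ≤ 1 / τ),
            ENNReal.ofReal_mul hK]
      _ = ENNReal.ofReal (∑ e ∈ E, (1 / τ) * (((1 - |δ| * C / cQ)⁻¹ * δ ^ 2)
            * (∫ t in (0:ℝ)..τ, g e t))) :=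
          (ENNReal.ofReal_sum_of_nonneg fun e he =>
            mul_nonneg (by positivity) (mul_nonneg hK (hIg e he))).symm
      _ = ENNReal.ofReal ((1 - |δ| * C / cQ)⁻¹ * (δ ^ 2 * Bsum)) := by
          congr 1
          rw [hB_def, Finset.mul_sum, Finset.mul_sum]
          exact Finset.sum_congr rfl fun e he => by ring
  -- identification of Bsum
  have hgE : ∀ (i j : V), (i, j) ∈ E → ∀ t : ℝ, g (i, j) t
      = (Z i j t - (m i t * w i j t - m j t * w j i t)) ^ 2 * (pi i t * w i j t)
        / (2 * (pi i t * w i j t + pi j t * w j i t) ^ 2) := by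
    intro i j he t
    simp only [hg_def, hq_def, if_pos he]
    have hS := (hS_pos i j he t).ne'
    have hQ := (mul_pos (hpi_pos i t) (hw_pos i j he t)).ne'
    rw [add_sub_cancel_left, div_pow, div_div, div_eq_div_iff (mul_ne_zero (pow_ne_zero 2 hS)
      (mul_ne_zero two_ne_zero hQ)) (mul_ne_zero two_ne_zero (pow_ne_zero 2 hS))]
    ring
  have hpair : ∀ t : ℝ, ∑ e ∈ E, g e t = (1 / 4) * ∑ e ∈ E,
      (Z e.1 e.2 t - (m e.1 t * w e.1 e.2 t - m e.2 t * w e.2 e.1 t)) ^ 2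
        / (pi e.1 t * w e.1 e.2 t + pi e.2 t * w e.2 e.1 t) := by
    intro t
    have hswap : ∑ e ∈ E, g e t = ∑ e ∈ E, g (e.2, e.1) t :=
      Finset.sum_nbij' (fun e => (e.2, e.1)) (fun e => (e.2, e.1))
        (fun e he => (hE_symm e.1 e.2).mp he) (fun e he => (hE_symm e.1 e.2).mp he)
        (fun e _ => rfl) (fun e _ => rfl) (fun e _ => rfl)
    have hcomb : ∀ e ∈ E, g e t + g (e.2, e.1) t
        = (1 / 2) * ((Z e.1 e.2 t - (m e.1 t * w e.1 e.2 t - m e.2 t * w e.2 e.1 t)) ^ 2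
            / (pi e.1 t * w e.1 e.2 t + pi e.2 t * w e.2 e.1 t)) := by
      intro e he
      obtain ⟨i, j⟩ := e
      have he' := (hE_symm i j).mp he
      rw [hgE i j he t, hgE j i he' t]
      have hS1 := (hS_pos i j he t).ne'
      have hS2 := (hS_pos j i he' t).ne'
      rw [hZ_anti j i t]
      rw [add_comm (pi j t * w j i t)]
      rw [div_add_div _ _ (mul_ne_zero two_ne_zero (pow_ne_zero 2 hS1))
        (mul_ne_zero two_ne_zero (pow_ne_zero 2 hS1)), div_eq_iff (mul_ne_zero
        (mul_ne_zero two_ne_zero (pow_ne_zero 2 hS1)) (mul_ne_zero two_ne_zero (pow_ne_zero 2 hS1)))]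
      field_simp
      ring
    have h2 : 2 * ∑ e ∈ E, g e t = ∑ e ∈ E,
        (1 / 2) * ((Z e.1 e.2 t - (m e.1 t * w e.1 e.2 t - m e.2 t * w e.2 e.1 t)) ^ 2
          / (pi e.1 t * w e.1 e.2 t + pi e.2 t * w e.2 e.1 t)) := by
      calc 2 * ∑ e ∈ E, g e t = ∑ e ∈ E, g e t + ∑ e ∈ E, g (e.2, e.1) t := by
            rw [← hswap]; ring
        _ = ∑ e ∈ E, (g e t + g (e.2, e.1) t) := Finset.sum_add_distrib.symm
        _ = _ := Finset.sum_congr rfl hcomb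
    have h3 : ∑ e ∈ E,
        (1 / 2) * ((Z e.1 e.2 t - (m e.1 t * w e.1 e.2 t - m e.2 t * w e.2 e.1 t)) ^ 2
          / (pi e.1 t * w e.1 e.2 t + pi e.2 t * w e.2 e.1 t))
        = (1 / 2) * ∑ e ∈ E,
          ((Z e.1 e.2 t - (m e.1 t * w e.1 e.2 t - m e.2 t * w e.2 e.1 t)) ^ 2
          / (pi e.1 t * w e.1 e.2 t + pi e.2 t * w e.2 e.1 t)) := (Finset.mul_sum _ _ _).symm
    rw [h3] at h2
    linarith
  have hSAint : ∀ e ∈ E, IntervalIntegrable (fun t =>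
      (Z e.1 e.2 t - (m e.1 t * w e.1 e.2 t - m e.2 t * w e.2 e.1 t)) ^ 2
        / (pi e.1 t * w e.1 e.2 t + pi e.2 t * w e.2 e.1 t)) MeasureTheory.volume 0 τ := by
    intro e he
    apply Continuous.intervalIntegrable
    apply Continuous.div
    · fun_prop
    · fun_prop
    · exact fun t => (hS_pos e.1 e.2 he t).ne'
  have hBval : Bsum = (1 / 4) * ∑ e ∈ E, (1 / τ) * ∫ t in (0:ℝ)..τ,
      (Z e.1 e.2 t - (m e.1 t * w e.1 e.2 t - m e.2 t * w e.2 e.1 t)) ^ 2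
        / (pi e.1 t * w e.1 e.2 t + pi e.2 t * w e.2 e.1 t) := by
    have hint1 : ∀ e ∈ E, IntervalIntegrable (g e) MeasureTheory.volume 0 τ :=
      fun e he => (hg_contE e he).intervalIntegrable 0 τ
    calc Bsum = (1 / τ) * ∑ e ∈ E, ∫ t in (0:ℝ)..τ, g e t := by
          rw [hB_def, Finset.mul_sum]
      _ = (1 / τ) * ∫ t in (0:ℝ)..τ, ∑ e ∈ E, g e t := by
          rw [intervalIntegral.integral_finset_sum hint1]
      _ = (1 / τ) * ∫ t in (0:ℝ)..τ, ((1 / 4) * ∑ e ∈ E,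
            (Z e.1 e.2 t - (m e.1 t * w e.1 e.2 t - m e.2 t * w e.2 e.1 t)) ^ 2
              / (pi e.1 t * w e.1 e.2 t + pi e.2 t * w e.2 e.1 t)) := by
          rw [intervalIntegral.integral_congr (fun t _ => hpair t)]
      _ = (1 / 4) * ((1 / τ) * ∑ e ∈ E, ∫ t in (0:ℝ)..τ,
            (Z e.1 e.2 t - (m e.1 t * w e.1 e.2 t - m e.2 t * w e.2 e.1 t)) ^ 2
              / (pi e.1 t * w e.1 e.2 t + pi e.2 t * w e.2 e.1 t)) := by
          rw [intervalIntegral.integral_const_mul, intervalIntegral.integral_finset_sum hSAint]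
          ring
      _ = (1 / 4) * ∑ e ∈ E, (1 / τ) * ∫ t in (0:ℝ)..τ,
            (Z e.1 e.2 t - (m e.1 t * w e.1 e.2 t - m e.2 t * w e.2 e.1 t)) ^ 2
              / (pi e.1 t * w e.1 e.2 t + pi e.2 t * w e.2 e.1 t) := by
          rw [Finset.mul_sum]
  -- the limit constant
  set Rt : ℝ := (1 / (4 * y0 ^ 2)) * ∑ e ∈ E, (1 / τ) * (∫ t in (0:ℝ)..τ,
      (Z e.1 e.2 t - (m e.1 t * w e.1 e.2 t - m e.2 t * w e.2 e.1 t)) ^ 2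
        / (pi e.1 t * w e.1 e.2 t + pi e.2 t * w e.2 e.1 t)) with hRt_def
  have hsum_nonneg : 0 ≤ ∑ e ∈ E, (1 / τ) * (∫ t in (0:ℝ)..τ,
      (Z e.1 e.2 t - (m e.1 t * w e.1 e.2 t - m e.2 t * w e.2 e.1 t)) ^ 2
        / (pi e.1 t * w e.1 e.2 t + pi e.2 t * w e.2 e.1 t)) :=
    Finset.sum_nonneg fun e he => mul_nonneg (by positivity)
      (intervalIntegral.integral_nonneg hτ.le fun t _ =>
        div_nonneg (sq_nonneg _) (hS_pos e.1 e.2 he t).le)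
  have hRt0 : 0 ≤ Rt := by
    rw [hRt_def]; exact mul_nonneg (by positivity) hsum_nonneg
  have hBR : Bsum = y0 ^ 2 * Rt := by
    rw [hBval, hRt_def]
    field_simp
  -- final limsup estimate
  apply ENNReal.le_of_forall_pos_le_add
  intro ε hε _
  apply Filter.limsup_le_of_le (by isBoundedDefault)
  set ε' : ℝ := (ε : ℝ) / (Rt + 1) with hε'def
  have hεR : (0:ℝ) < (ε : ℝ) := by exact_mod_cast hε
  have hε'0 : 0 < ε' := by
    rw [hε'def]; exact div_pos hεR (by linarith)
  set r : ℝ := |y0| * min δ0 (cQ * ε' / (2 * C)) with hrdef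
  have hr0 : 0 < r := mul_pos (abs_pos.mpr hy0_ne) (lt_min hδ00 (by positivity))
  filter_upwards [mem_nhdsWithin_of_mem_nhds (Metric.ball_mem_nhds y0 hr0),
    self_mem_nhdsWithin] with y hy hne
  have hyne : y ≠ y0 := hne
  set δ : ℝ := (y - y0) / y0 with hδdef
  have hyy : y0 * (1 + δ) = y := by rw [hδdef]; field_simp; ring
  have hδne : δ ≠ 0 := div_ne_zero (sub_ne_zero.mpr hyne) hy0_ne
  have hdist : |y - y0| < r := by
    have h := Metric.mem_ball.mp hy
    rwa [Real.dist_eq] at h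
  have habs : |δ| ≤ min δ0 (cQ * ε' / (2 * C)) := by
    rw [hδdef, abs_div, div_le_iff₀ (abs_pos.mpr hy0_ne), mul_comm]
    rw [hrdef] at hdist
    linarith
  have hδδ0 : |δ| ≤ δ0 := le_trans habs (min_le_left _ _)
  have h1 : Iag y ≤ ENNReal.ofReal ((1 - |δ| * C / cQ)⁻¹ * (δ ^ 2 * Bsum)) := by
    rw [← hyy]
    exact le_trans (hmem δ hδδ0) (hF δ hδδ0)
  have hfac' := hfac δ hδδ0
  have hx12 := hhalf δ hδδ0
  have hδε : |δ| * C / cQ ≤ ε' / 2 := by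
    have h2 := le_trans habs (min_le_right _ _)
    have h3 := mul_le_mul_of_nonneg_right h2 hC0.le
    have h4 : cQ * ε' / (2 * C) * C = cQ * ε' / 2 := by field_simp
    rw [div_le_div_iff₀ hcQ0 two_pos]
    nlinarith
  have hinv : (1 - |δ| * C / cQ)⁻¹ ≤ 1 + ε' := by
    rw [inv_eq_one_div, div_le_iff₀ hfac']
    nlinarith [hδε, hx12, hε'0.le]
  have hεe : ε' * (Rt + 1) = (ε : ℝ) := by
    rw [hε'def]; field_simp
  have hscal : (1 - |δ| * C / cQ)⁻¹ * (δ ^ 2 * Bsum) ≤ (δ ^ 2 * y0 ^ 2) * (Rt + (ε : ℝ)) := by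
    rw [hBR]
    have ha : (1 - |δ| * C / cQ)⁻¹ * Rt ≤ (1 + ε') * Rt :=
      mul_le_mul_of_nonneg_right hinv hRt0
    have hb2 : (1 + ε') * Rt ≤ Rt + (ε : ℝ) := by nlinarith [hεe, hRt0, hε'0.le]
    have hc2 : (1 - |δ| * C / cQ)⁻¹ * (δ ^ 2 * (y0 ^ 2 * Rt))
        = (δ ^ 2 * y0 ^ 2) * ((1 - |δ| * C / cQ)⁻¹ * Rt) := by ring
    rw [hc2]
    exact mul_le_mul_of_nonneg_left (le_trans ha hb2) (by positivity)
  have hy2 : (y - y0) ^ 2 = δ ^ 2 * y0 ^ 2 := by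
    rw [hδdef]; field_simp
  have hXpos : (0:ℝ) < δ ^ 2 * y0 ^ 2 := by positivity
  have hXne : ENNReal.ofReal (δ ^ 2 * y0 ^ 2) ≠ 0 := (ENNReal.ofReal_pos.mpr hXpos).ne'
  calc Iag y / ENNReal.ofReal ((y - y0) ^ 2)
      ≤ ENNReal.ofReal ((δ ^ 2 * y0 ^ 2) * (Rt + (ε : ℝ))) / ENNReal.ofReal ((y - y0) ^ 2) :=
        ENNReal.div_le_div_right (le_trans h1 (ENNReal.ofReal_le_ofReal hscal)) _
    _ = ENNReal.ofReal (δ ^ 2 * y0 ^ 2) * ENNReal.ofReal (Rt + (ε : ℝ))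
          / ENNReal.ofReal (δ ^ 2 * y0 ^ 2) := by
        rw [hy2, ENNReal.ofReal_mul hXpos.le]
    _ = ENNReal.ofReal (Rt + (ε : ℝ)) := by
        rw [mul_comm, mul_div_assoc, ENNReal.div_self hXne ENNReal.ofReal_ne_top, mul_one]
    _ ≤ ENNReal.ofReal Rt + ↑ε := by
        rw [ENNReal.ofReal_add hRt0 hεR.le, ENNReal.ofReal_coe_nnreal]
end

section
/- Corollary (quadratic bound with the constant C_a(p), antisymmetric increments). Let p = (p_i)_{i∈V} be a time-independent probability vector (p_i ≥ 0, Σ_{i∈V} p_i = 1) such that Σ_{i∈V} p_i · (1/τ)∫₀^τ γ_i(t) dt = 0. Define C_a(p) := Σ_{(i,j)∈E} (1/τ)∫₀^τ (p_i w_{ij}(t) − p_j w_{ji}(t))² / (𝒬_{ij}(t) + 𝒬_{ji}(t)) dt. Then limsup_{y→y_{α,γ}, y≠y_{α,γ}} I_{α,γ}(y)/(y − y_{α,γ})² ≤ C_a(p)/(4 y_{α,γ}²), where the limsup is taken in [0,∞]. -/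
open MeasureTheory Filter
open scoped Topology ENNReal

set_option maxHeartbeats 1000000

lemma auxA_deriv {y : ℝ} (hy : 0 < y) :
    HasDerivAt (fun x : ℝ => (x - 1) ^ 2 / 2 - (x - 1 - Real.log x))
      ((y - 1) - (1 - y⁻¹)) y := by
  have h1 : HasDerivAt (fun x : ℝ => (x - 1) ^ 2 / 2) (y - 1) y := by
    have : HasDerivAt (fun x : ℝ => (x - 1) ^ 2) (2 * (y - 1) ^ 1 * 1) y :=
      (((hasDerivAt_id y).sub_const 1).pow 2)
    simpa using this.div_const 2
  have h2 : HasDerivAt (fun x : ℝ => x - 1 - Real.log x) (1 - y⁻¹) y := by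
    have := ((hasDerivAt_id y).sub_const 1).sub (Real.hasDerivAt_log hy.ne')
    exact this
  exact h1.sub h2

lemma auxA {x : ℝ} (hx : 1 ≤ x) : x - 1 - Real.log x ≤ (x - 1) ^ 2 / 2 := by
  set f : ℝ → ℝ := fun x => (x - 1) ^ 2 / 2 - (x - 1 - Real.log x) with hf
  have key : MonotoneOn f (Set.Ici 1) := by
    apply monotoneOn_of_deriv_nonneg (convex_Ici 1)
    · apply ContinuousOn.sub (by fun_prop)
      apply ContinuousOn.sub (by fun_prop)
      exact Real.continuousOn_log.mono (by intro y hy; simp at hy ⊢; linarith)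
    · intro y hy
      rw [interior_Ici] at hy
      have hy1 : (1:ℝ) < y := hy
      exact (auxA_deriv (by linarith)).differentiableAt.differentiableWithinAt
    · intro y hy
      rw [interior_Ici] at hy
      have hy1 : (1:ℝ) < y := hy
      rw [(auxA_deriv (by linarith)).deriv]
      have : (y - 1) - (1 - y⁻¹) = (y - 1) ^ 2 / y := by field_simp
      rw [this]; positivity
  have h0 : f 1 ≤ f x := key (by simp) hx hx
  simp [hf, Real.log_one] at h0
  linarith

lemma auxB_deriv {y : ℝ} (hy : 0 < y) :
    HasDerivAt (fun x : ℝ => (x - 1) ^ 2 / 2 - (x * Real.log x - x + 1))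
      ((y - 1) - (Real.log y + 1 - 1)) y := by
  have h1 : HasDerivAt (fun x : ℝ => (x - 1) ^ 2 / 2) (y - 1) y := by
    have : HasDerivAt (fun x : ℝ => (x - 1) ^ 2) (2 * (y - 1) ^ 1 * 1) y :=
      (((hasDerivAt_id y).sub_const 1).pow 2)
    simpa using this.div_const 2
  have h2 : HasDerivAt (fun x : ℝ => x * Real.log x - x + 1) (Real.log y + 1 - 1) y := by
    have := ((Real.hasDerivAt_mul_log hy.ne').sub (hasDerivAt_id y)).add_const 1
    simpa using this
  exact h1.sub h2

lemma auxB {x : ℝ} (hx : 1 ≤ x) : x * Real.log x - x + 1 ≤ (x - 1) ^ 2 / 2 := by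
  set f : ℝ → ℝ := fun x => (x - 1) ^ 2 / 2 - (x * Real.log x - x + 1) with hf
  have key : MonotoneOn f (Set.Ici 1) := by
    apply monotoneOn_of_deriv_nonneg (convex_Ici 1)
    · apply ContinuousOn.sub (by fun_prop)
      apply ContinuousOn.add ?_ (by fun_prop)
      apply ContinuousOn.sub ?_ (by fun_prop)
      apply ContinuousOn.mul (by fun_prop)
      exact Real.continuousOn_log.mono (by intro y hy; simp at hy ⊢; linarith)
    · intro y hy
      rw [interior_Ici] at hy
      have hy1 : (1:ℝ) < y := hy
      exact (auxB_deriv (by linarith)).differentiableAt.differentiableWithinAt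
    · intro y hy
      rw [interior_Ici] at hy
      have hy1 : (1:ℝ) < y := hy
      rw [(auxB_deriv (by linarith)).deriv]
      have := Real.log_le_sub_one_of_pos (show (0:ℝ) < y by linarith)
      linarith
  have h0 : f 1 ≤ f x := key (by simp) hx hx
  simp [hf, Real.log_one] at h0
  linarith

/-- Key bound: `Φ(q,p) ≤ (q-p)²/(2m)` whenever `0 < m ≤ q, p`. -/
lemma Phi_le_quad {q p m : ℝ} (hm : 0 < m) (hmq : m ≤ q) (hmp : m ≤ p) :
    Phi q p ≤ ENNReal.ofReal ((q - p) ^ 2 / (2 * m)) := by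
  have hq : 0 < q := lt_of_lt_of_le hm hmq
  have hp : 0 < p := lt_of_lt_of_le hm hmp
  rw [Phi, if_neg hq.ne', if_neg hp.ne']
  apply ENNReal.ofReal_le_ofReal
  have hmin : q * Real.log (q / p) - q + p ≤ (q - p) ^ 2 / (2 * min q p) := by
    rcases le_total p q with h | h
    · -- p ≤ q, min = p, use auxB with x = q/p
      have hx : 1 ≤ q / p := (one_le_div hp).2 h
      have := auxB hx
      have h1 : p * (q / p * Real.log (q / p) - q / p + 1) ≤ p * ((q / p - 1) ^ 2 / 2) :=
        mul_le_mul_of_nonneg_left this hp.le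
      have e1 : p * (q / p * Real.log (q / p) - q / p + 1) = q * Real.log (q / p) - q + p := by
        field_simp
      have e2 : p * ((q / p - 1) ^ 2 / 2) = (q - p) ^ 2 / (2 * p) := by
        field_simp
      rw [min_eq_right h]
      rw [e1, e2] at h1; exact h1
    · -- q ≤ p, min = q, use auxA with x = p/q
      have hx : 1 ≤ p / q := (one_le_div hq).2 h
      have := auxA hx
      have h1 : q * (p / q - 1 - Real.log (p / q)) ≤ q * ((p / q - 1) ^ 2 / 2) :=
        mul_le_mul_of_nonneg_left this hq.le
      have e1 : q * (p / q - 1 - Real.log (p / q)) = q * Real.log (q / p) - q + p := by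
        have : Real.log (q / p) = - Real.log (p / q) := by
          rw [← Real.log_inv]; congr 1; rw [inv_div]
        rw [this]; field_simp; ring
      have e2 : q * ((p / q - 1) ^ 2 / 2) = (q - p) ^ 2 / (2 * q) := by
        field_simp; ring
      rw [min_eq_left h]
      rw [e1, e2] at h1; exact h1
  refine le_trans hmin ?_
  apply div_le_div_of_nonneg_left (by positivity) (by positivity)
  have : m ≤ min q p := le_min hmq hmp
  linarith

open MeasureTheory Filter
open scoped Topology ENNReal Classical

/-- The symmetric perturbation field. -/
noncomputable def cAux {V : Type} [Fintype V] (E : Finset (V × V))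
    (w : V → V → ℝ → ℝ) (pi : V → ℝ → ℝ) (p : V → ℝ) (i j : V) (t : ℝ) : ℝ :=
  if (i, j) ∈ E then
    (p i * w i j t * (pi j t * w j i t) + p j * w j i t * (pi i t * w i j t)) /
      (pi i t * w i j t + pi j t * w j i t)
  else 0

section caux
variable {V : Type} [Fintype V] (E : Finset (V × V))
  (w : V → V → ℝ → ℝ) (pi : V → ℝ → ℝ) (p : V → ℝ)

lemma cAux_symm (hE_symm : ∀ i j : V, (i, j) ∈ E ↔ (j, i) ∈ E) (i j : V) (t : ℝ) :
    cAux E w pi p i j t = cAux E w pi p j i t := by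
  unfold cAux
  by_cases h : (i, j) ∈ E
  · rw [if_pos h, if_pos ((hE_symm i j).1 h)]
    rw [show p i * w i j t * (pi j t * w j i t) + p j * w j i t * (pi i t * w i j t)
      = p j * w j i t * (pi i t * w i j t) + p i * w i j t * (pi j t * w j i t) from by ring,
      show pi i t * w i j t + pi j t * w j i t = pi j t * w j i t + pi i t * w i j t from by ring]
  · rw [if_neg h, if_neg (fun hc => h ((hE_symm j i).1 hc))]

lemma cAux_nonneg (hw_pos : ∀ i j, (i, j) ∈ E → ∀ t, 0 < w i j t)
    (hE_symm : ∀ i j : V, (i, j) ∈ E ↔ (j, i) ∈ E)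
    (hpi_pos : ∀ i t, 0 < pi i t) (hp_nonneg : ∀ i, 0 ≤ p i) (i j : V) (t : ℝ) :
    0 ≤ cAux E w pi p i j t := by
  unfold cAux
  by_cases h : (i, j) ∈ E
  · rw [if_pos h]
    have h1 := hw_pos i j h t
    have h2 := hw_pos j i ((hE_symm i j).1 h) t
    have h3 := hpi_pos i t
    have h4 := hpi_pos j t
    have h5 := hp_nonneg i
    have h6 := hp_nonneg j
    positivity
  · rw [if_neg h]

lemma cAux_zero {i j : V} (h : (i, j) ∉ E) (t : ℝ) : cAux E w pi p i j t = 0 := by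
  unfold cAux; rw [if_neg h]

lemma cAux_cont (hw_cont : ∀ i j, Continuous (w i j)) (hpi_cont : ∀ i, Continuous (pi i))
    (hw_pos : ∀ i j, (i, j) ∈ E → ∀ t, 0 < w i j t)
    (hpi_pos : ∀ i t, 0 < pi i t)
    (hE_symm : ∀ i j : V, (i, j) ∈ E ↔ (j, i) ∈ E) (i j : V) :
    Continuous (cAux E w pi p i j) := by
  unfold cAux
  by_cases h : (i, j) ∈ E
  · simp only [if_pos h]
    apply Continuous.div (by fun_prop) (by fun_prop)
    intro t
    have h1 := hw_pos i j h t
    have h3 := hpi_pos i t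
    have h4 := hpi_pos j t
    have h2 := hw_pos j i ((hE_symm i j).1 h) t
    positivity
  · simp only [if_neg h]; exact continuous_const

lemma cAux_periodic {τ : ℝ} (hw_per : ∀ i j, Function.Periodic (w i j) τ)
    (hpi_per : ∀ i, Function.Periodic (pi i) τ) (i j : V) :
    Function.Periodic (cAux E w pi p i j) τ := by
  intro t
  unfold cAux
  rw [hw_per i j t, hw_per j i t, hpi_per i t, hpi_per j t]

/-- boundedness of a periodic continuous function relative to a positive one -/
lemma bound_of_periodic {τ : ℝ} (hτ : 0 < τ) {f g : ℝ → ℝ}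
    (hf : Continuous f) (hg : Continuous g) (hgpos : ∀ t, 0 < g t)
    (hfper : Function.Periodic f τ) (hgper : Function.Periodic g τ) :
    ∃ C, ∀ t, f t ≤ C * g t := by
  have hr : Continuous (fun t => f t / g t) := hf.div hg (fun t => (hgpos t).ne')
  have hrper : Function.Periodic (fun t => f t / g t) τ := hfper.div hgper
  obtain ⟨t0, -, ht0⟩ := isCompact_Icc.exists_isMaxOn (Set.nonempty_Icc.2 hτ.le)
    (hr.continuousOn (s := Set.Icc 0 τ))
  refine ⟨f t0 / g t0, fun t => ?_⟩
  obtain ⟨s, hs, he⟩ := hrper.exists_mem_Ico₀ hτ t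
  have h1 : f t / g t ≤ f t0 / g t0 := by
    rw [he]; exact ht0 ⟨hs.1, hs.2.le⟩
  exact (div_le_iff₀ (hgpos t)).1 h1

end caux

theorem stmt5
    {V : Type} [Fintype V] [Nonempty V]
    (E : Finset (V × V)) (hE : ∀ i : V, (i, i) ∉ E)
    (hE_symm : ∀ i j : V, (i, j) ∈ E ↔ (j, i) ∈ E)
    (τ : ℝ) (hτ : 0 < τ)
    (w : V → V → ℝ → ℝ)
    (hw_cont : ∀ i j, Continuous (w i j))
    (hw_per : ∀ i j, Function.Periodic (w i j) τ)
    (hw_pos : ∀ i j, (i, j) ∈ E → ∀ t, 0 < w i j t)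
    (hw_zero : ∀ i j, (i, j) ∉ E → ∀ t, w i j t = 0)
    (pi : V → ℝ → ℝ)
    (hpi_diff : ∀ i, ContDiff ℝ 1 (pi i))
    (hpi_per : ∀ i, Function.Periodic (pi i) τ)
    (hpi_pos : ∀ i t, 0 < pi i t)
    (hpi_sum : ∀ t : ℝ, ∑ i, pi i t = 1)
    (hpi_cont_eq : ∀ i t, deriv (pi i) t
      + (∑ j, pi i t * w i j t) - (∑ j, pi j t * w j i t) = 0)
    (α : V → V → ℝ → ℝ)
    (hα_cont : ∀ i j, Continuous (α i j))
    (hα_per : ∀ i j, Function.Periodic (α i j) τ)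
    (hα_anti : ∀ i j (t : ℝ), α i j t = - α j i t)
    (γ : V → ℝ → ℝ)
    (hγ_cont : ∀ i, Continuous (γ i))
    (hγ_per : ∀ i, Function.Periodic (γ i) τ)
    (y0 : ℝ)
    (hy0 : y0 = (1 / τ) * (∫ t in (0:ℝ)..τ,
      ((∑ i, ∑ j, α i j t * (pi i t * w i j t)) + ∑ i, γ i t * pi i t)))
    (hy0_ne : y0 ≠ 0)
    (Iag : ℝ → ℝ≥0∞)
    (hI : ∀ y : ℝ, Iag y = sInf { c : ℝ≥0∞ |
      ∃ (Q : V → V → ℝ → ℝ) (ρ : V → ℝ → ℝ),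
        (∀ i j, Continuous (Q i j)) ∧
        (∀ i j, Function.Periodic (Q i j) τ) ∧
        (∀ i j t, 0 ≤ Q i j t) ∧
        (∀ i j, (i, j) ∉ E → ∀ t, Q i j t = 0) ∧
        (∀ i, ContDiff ℝ 1 (ρ i)) ∧
        (∀ i, Function.Periodic (ρ i) τ) ∧
        (∀ i t, 0 ≤ ρ i t) ∧
        (∀ t : ℝ, ∑ i, ρ i t = 1) ∧
        (∀ i t, deriv (ρ i) t + (∑ j, Q i j t) - (∑ j, Q j i t) = 0) ∧
        ((1 / τ) * (∫ t in (0:ℝ)..τ,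
          ((∑ i, ∑ j, α i j t * Q i j t) + ∑ i, γ i t * ρ i t)) = y) ∧
        c = ∑ e ∈ E, ENNReal.ofReal (1 / τ) *
          (∫⁻ t in Set.Ioc (0:ℝ) τ, Phi (Q e.1 e.2 t) (ρ e.1 t * w e.1 e.2 t)) })
    -- the probability vector p
    (p : V → ℝ) (hp_nonneg : ∀ i, 0 ≤ p i) (hp_sum : ∑ i, p i = 1)
    (hp_γ : ∑ i, p i * ((1 / τ) * (∫ t in (0:ℝ)..τ, γ i t)) = 0)
    (Cap : ℝ)
    (hCap : Cap = ∑ e ∈ E, (1 / τ) * (∫ t in (0:ℝ)..τ,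
      (p e.1 * w e.1 e.2 t - p e.2 * w e.2 e.1 t) ^ 2
        / (pi e.1 t * w e.1 e.2 t + pi e.2 t * w e.2 e.1 t))) :
    Filter.limsup (fun y : ℝ => Iag y / ENNReal.ofReal ((y - y0) ^ 2)) (𝓝[≠] y0)
      ≤ ENNReal.ofReal (Cap / (4 * y0 ^ 2)) := by
  classical
  have hpic : ∀ i, Continuous (pi i) := fun i => (hpi_diff i).continuous
  have hmemswap : ∀ e : V × V, e ∈ E → (e.2, e.1) ∈ E := fun e he =>
    (hE_symm e.1 e.2).1 (by simpa using he)
  have hmem' : ∀ e : V × V, e ∈ E → (e.1, e.2) ∈ E := fun e he => by simpa using he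
  have hQpos : ∀ e ∈ E, ∀ t : ℝ, 0 < pi e.1 t * w e.1 e.2 t := fun e he t =>
    mul_pos (hpi_pos _ t) (hw_pos _ _ (hmem' e he) t)
  have hden : ∀ e ∈ E, ∀ t : ℝ, 0 < pi e.1 t * w e.1 e.2 t + pi e.2 t * w e.2 e.1 t := by
    intro e he t
    have h1 := hQpos e he t
    have h2 : 0 < pi e.2 t * w e.2 e.1 t := mul_pos (hpi_pos _ t) (hw_pos _ _ (hmemswap e he) t)
    linarith
  -- the G functions
  set G : V × V → ℝ → ℝ := fun e t =>
    (p e.1 * w e.1 e.2 t - p e.2 * w e.2 e.1 t) ^ 2 * (pi e.1 t * w e.1 e.2 t) /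
      (pi e.1 t * w e.1 e.2 t + pi e.2 t * w e.2 e.1 t) ^ 2 with hG
  have hGcont : ∀ e ∈ E, Continuous (G e) := by
    intro e he
    apply Continuous.div (by fun_prop) (by fun_prop)
    intro t
    exact pow_ne_zero 2 (hden e he t).ne'
  have hGnonneg : ∀ e ∈ E, ∀ t, 0 ≤ G e t := by
    intro e he t
    have h1 := hQpos e he t
    have h2 := hden e he t
    simp only [hG]
    positivity
  -- bounds
  have hNex : ∀ e : V × V, ∃ C, e ∈ E → ∀ t,
      cAux E w pi p e.1 e.2 t + p e.1 * w e.1 e.2 t ≤ C * (pi e.1 t * w e.1 e.2 t) := by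
    intro e
    by_cases he : e ∈ E
    · obtain ⟨C, hC⟩ := bound_of_periodic hτ
        (f := fun t => cAux E w pi p e.1 e.2 t + p e.1 * w e.1 e.2 t)
        (g := fun t => pi e.1 t * w e.1 e.2 t)
        ((cAux_cont E w pi p hw_cont hpic hw_pos hpi_pos hE_symm e.1 e.2).add
          (continuous_const.mul (hw_cont e.1 e.2)))
        ((hpic e.1).mul (hw_cont e.1 e.2)) (hQpos e he)
        (fun t => by
          simp only
          rw [cAux_periodic E w pi p hw_per hpi_per e.1 e.2 t, hw_per e.1 e.2 t])
        (fun t => by simp only; rw [hpi_per e.1 t, hw_per e.1 e.2 t])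
      exact ⟨C, fun _ => hC⟩
    · exact ⟨0, fun h => absurd h he⟩
  choose N hN using hNex
  have hMex : ∀ i : V, ∃ C, ∀ t, p i ≤ C * pi i t := fun i =>
    bound_of_periodic hτ continuous_const (hpic i) (hpi_pos i)
      (fun _ => rfl) (hpi_per i)
  choose M hM using hMex
  set D : ℝ := 1 + (∑ e ∈ E, |N e|) + ∑ i, |M i| with hD
  have hsumN : (0:ℝ) ≤ ∑ e ∈ E, |N e| := Finset.sum_nonneg fun e _ => abs_nonneg _
  have hsumM : (0:ℝ) ≤ ∑ i, |M i| := Finset.sum_nonneg fun i _ => abs_nonneg _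
  have hD1 : (1:ℝ) ≤ D := by simp only [hD]; linarith
  have hD0 : (0:ℝ) < D := lt_of_lt_of_le one_pos hD1
  have hND : ∀ e ∈ E, 1 + N e ≤ D := by
    intro e he
    have h1 : N e ≤ |N e| := le_abs_self _
    have h2 : |N e| ≤ ∑ e ∈ E, |N e| :=
      Finset.single_le_sum (fun e _ => abs_nonneg (N e)) he
    simp only [hD]; linarith
  have hMD : ∀ i : V, 1 + M i ≤ D := by
    intro i
    have h1 : M i ≤ |M i| := le_abs_self _
    have h2 : |M i| ≤ ∑ i, |M i| :=
      Finset.single_le_sum (fun i _ => abs_nonneg (M i)) (Finset.mem_univ i)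
    simp only [hD]; linarith
  set δ : ℝ := 1 / (2 * D) with hδdef
  have hδ : 0 < δ := by positivity
  -- the key estimate
  have key : ∀ u : ℝ, |u| ≤ δ → Iag ((1 - u) * y0) ≤
      ENNReal.ofReal (u ^ 2 * Cap / (4 * (1 - |u| * D))) := by
    intro u hu
    have hud : |u| * D ≤ 1 / 2 := by
      have := mul_le_mul_of_nonneg_right hu hD0.le
      rw [hδdef] at this
      calc |u| * D ≤ 1 / (2 * D) * D := this
        _ = 1 / 2 := by rw [div_mul_eq_mul_div, one_mul, mul_comm 2 D, ← div_div, div_self hD0.ne']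
    have h1u : (1:ℝ) / 2 ≤ 1 - |u| * D := by linarith
    have h1upos : (0:ℝ) < 1 - |u| * D := lt_of_lt_of_le (by norm_num) h1u
    set Qu : V → V → ℝ → ℝ :=
      fun i j t => (1 - u) * (pi i t * w i j t) + u * cAux E w pi p i j t with hQu
    set ρu : V → ℝ → ℝ := fun i t => (1 - u) * pi i t + u * p i with hρu
    have hρu_ge : ∀ i t, (1 - |u| * D) * pi i t ≤ ρu i t := by
      intro i t
      have h2 := hM i t
      have hπ := hpi_pos i t
      have h3 : -(|u| * (M i * pi i t)) ≤ u * p i := by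
        rcases le_or_gt 0 u with h | h
        · have : 0 ≤ u * p i := mul_nonneg h (hp_nonneg i)
          have h4 : 0 ≤ |u| * (M i * pi i t) :=
            mul_nonneg (abs_nonneg u) (le_trans (hp_nonneg i) h2)
          linarith
        · rw [abs_of_neg h]
          have h5 : u * (M i * pi i t) ≤ u * p i :=
            (mul_le_mul_left_of_neg h).2 h2
          linarith
      have h6 : (1 - |u|) * pi i t ≤ (1 - u) * pi i t :=
        mul_le_mul_of_nonneg_right (by linarith [le_abs_self u]) hπ.le
      have h7 : |u| * ((1 + M i) * pi i t) ≤ |u| * (D * pi i t) :=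
        mul_le_mul_of_nonneg_left
          (mul_le_mul_of_nonneg_right (hMD i) hπ.le) (abs_nonneg u)
      simp only [hρu]
      nlinarith [abs_nonneg u]
    have hρu_nonneg : ∀ i t, 0 ≤ ρu i t := fun i t =>
      le_trans (mul_nonneg h1upos.le (hpi_pos i t).le) (hρu_ge i t)
    have hcbound : ∀ e ∈ E, ∀ t : ℝ, cAux E w pi p e.1 e.2 t ≤ N e * (pi e.1 t * w e.1 e.2 t) := by
      intro e he t
      have h1 := hN e he t
      have h2 : 0 ≤ p e.1 * w e.1 e.2 t :=
        mul_nonneg (hp_nonneg e.1) (hw_pos _ _ (hmem' e he) t).le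
      linarith
    have hpwbound : ∀ e ∈ E, ∀ t : ℝ, p e.1 * w e.1 e.2 t ≤ N e * (pi e.1 t * w e.1 e.2 t) := by
      intro e he t
      have h1 := hN e he t
      have h2 : 0 ≤ cAux E w pi p e.1 e.2 t :=
        cAux_nonneg E w pi p hw_pos hE_symm hpi_pos hp_nonneg e.1 e.2 t
      linarith
    have hQu_ge : ∀ e ∈ E, ∀ t : ℝ,
        (1 - |u| * D) * (pi e.1 t * w e.1 e.2 t) ≤ Qu e.1 e.2 t := by
      intro e he t
      have hQp := hQpos e he t
      have hc0 : 0 ≤ cAux E w pi p e.1 e.2 t :=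
        cAux_nonneg E w pi p hw_pos hE_symm hpi_pos hp_nonneg e.1 e.2 t
      have hcb := hcbound e he t
      have h3 : -(|u| * (N e * (pi e.1 t * w e.1 e.2 t))) ≤ u * cAux E w pi p e.1 e.2 t := by
        rcases le_or_gt 0 u with h | h
        · have h4 : 0 ≤ u * cAux E w pi p e.1 e.2 t := mul_nonneg h hc0
          have h5 : 0 ≤ |u| * (N e * (pi e.1 t * w e.1 e.2 t)) :=
            mul_nonneg (abs_nonneg u) (le_trans hc0 hcb)
          linarith
        · rw [abs_of_neg h]
          have h5 : u * (N e * (pi e.1 t * w e.1 e.2 t)) ≤ u * cAux E w pi p e.1 e.2 t :=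
            (mul_le_mul_left_of_neg h).2 hcb
          linarith
      have h6 : (1 - |u|) * (pi e.1 t * w e.1 e.2 t) ≤ (1 - u) * (pi e.1 t * w e.1 e.2 t) :=
        mul_le_mul_of_nonneg_right (by linarith [le_abs_self u]) hQp.le
      have h7 : |u| * ((1 + N e) * (pi e.1 t * w e.1 e.2 t)) ≤
          |u| * (D * (pi e.1 t * w e.1 e.2 t)) :=
        mul_le_mul_of_nonneg_left
          (mul_le_mul_of_nonneg_right (hND e he) hQp.le) (abs_nonneg u)
      simp only [hQu]
      nlinarith [abs_nonneg u]
    have hρuw_ge : ∀ e ∈ E, ∀ t : ℝ,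
        (1 - |u| * D) * (pi e.1 t * w e.1 e.2 t) ≤ ρu e.1 t * w e.1 e.2 t := by
      intro e he t
      have := mul_le_mul_of_nonneg_right (hρu_ge e.1 t) (hw_pos _ _ (hmem' e he) t).le
      calc (1 - |u| * D) * (pi e.1 t * w e.1 e.2 t)
          = (1 - |u| * D) * pi e.1 t * w e.1 e.2 t := by ring
        _ ≤ ρu e.1 t * w e.1 e.2 t := this
    -- feasibility
    have hfeas : Iag ((1 - u) * y0) ≤ ∑ e ∈ E, ENNReal.ofReal (1 / τ) *
        (∫⁻ t in Set.Ioc (0:ℝ) τ, Phi (Qu e.1 e.2 t) (ρu e.1 t * w e.1 e.2 t)) := by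
      rw [hI]
      apply sInf_le
      refine ⟨Qu, ρu, ?_, ?_, ?_, ?_, ?_, ?_, ?_, ?_, ?_, ?_, rfl⟩
      · intro i j
        exact (continuous_const.mul ((hpic i).mul (hw_cont i j))).add
          (continuous_const.mul (cAux_cont E w pi p hw_cont hpic hw_pos hpi_pos hE_symm i j))
      · intro i j t
        simp only [hQu]
        rw [hpi_per i t, hw_per i j t, cAux_periodic E w pi p hw_per hpi_per i j t]
      · intro i j t
        by_cases h : (i, j) ∈ E
        · exact le_trans (mul_nonneg h1upos.le (hQpos (i, j) h t).le) (hQu_ge (i, j) h t)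
        · simp [hQu, hw_zero i j h t, cAux_zero E w pi p h t]
      · intro i j h t
        simp [hQu, hw_zero i j h t, cAux_zero E w pi p h t]
      · intro i
        exact (contDiff_const.mul (hpi_diff i)).add contDiff_const
      · intro i t
        simp only [hρu]
        rw [hpi_per i t]
      · exact hρu_nonneg
      · intro t
        simp only [hρu]
        rw [Finset.sum_add_distrib, ← Finset.mul_sum, ← Finset.mul_sum, hpi_sum t, hp_sum]
        ring
      · intro i t
        have hd : deriv (ρu i) t = (1 - u) * deriv (pi i) t := by
          have hdiff : DifferentiableAt ℝ (pi i) t :=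
            (hpi_diff i).differentiable one_ne_zero t
          have h := (hdiff.hasDerivAt.const_mul (1 - u)).add_const (u * p i)
          exact h.deriv
        have hsc : ∑ j, cAux E w pi p i j t = ∑ j, cAux E w pi p j i t :=
          Finset.sum_congr rfl fun j _ => cAux_symm E w pi p hE_symm i j t
        have hexp1 : ∑ j, Qu i j t =
            (1 - u) * (∑ j, pi i t * w i j t) + u * ∑ j, cAux E w pi p i j t := by
          rw [Finset.mul_sum, Finset.mul_sum, ← Finset.sum_add_distrib]
        have hexp2 : ∑ j, Qu j i t =
            (1 - u) * (∑ j, pi j t * w j i t) + u * ∑ j, cAux E w pi p j i t := by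
          rw [Finset.mul_sum, Finset.mul_sum, ← Finset.sum_add_distrib]
        rw [hd, hexp1, hexp2, ← hsc]
        linear_combination (1 - u) * hpi_cont_eq i t
      · -- the constraint integral
        have hzero : ∀ t : ℝ, (∑ i, ∑ j, α i j t * cAux E w pi p i j t) = 0 := by
          intro t
          have h1 : (∑ i, ∑ j, α i j t * cAux E w pi p i j t)
              = ∑ i, ∑ j, α j i t * cAux E w pi p j i t := by rw [Finset.sum_comm]
          have h2 : (∑ i, ∑ j, α j i t * cAux E w pi p j i t)
              = -∑ i, ∑ j, α i j t * cAux E w pi p i j t := by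
            rw [← Finset.sum_neg_distrib]
            refine Finset.sum_congr rfl fun i _ => ?_
            rw [← Finset.sum_neg_distrib]
            refine Finset.sum_congr rfl fun j _ => ?_
            rw [hα_anti j i t, cAux_symm E w pi p hE_symm j i t]
            ring
          rw [h2] at h1
          linarith
        have hintegrand : ∀ t : ℝ,
            ((∑ i, ∑ j, α i j t * Qu i j t) + ∑ i, γ i t * ρu i t) =
            (1 - u) * ((∑ i, ∑ j, α i j t * (pi i t * w i j t)) + ∑ i, γ i t * pi i t)
              + u * ∑ i, p i * γ i t := by
          intro t
          have e1 : ∑ i, ∑ j, α i j t * Qu i j t =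
              (1 - u) * (∑ i, ∑ j, α i j t * (pi i t * w i j t))
                + u * (∑ i, ∑ j, α i j t * cAux E w pi p i j t) := by
            rw [Finset.mul_sum, Finset.mul_sum, ← Finset.sum_add_distrib]
            refine Finset.sum_congr rfl fun i _ => ?_
            rw [Finset.mul_sum, Finset.mul_sum, ← Finset.sum_add_distrib]
            refine Finset.sum_congr rfl fun j _ => ?_
            simp only [hQu]
            ring
          have e2 : ∑ i, γ i t * ρu i t =
              (1 - u) * (∑ i, γ i t * pi i t) + u * ∑ i, p i * γ i t := by
            rw [Finset.mul_sum, Finset.mul_sum, ← Finset.sum_add_distrib]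
            refine Finset.sum_congr rfl fun i _ => ?_
            simp only [hρu]
            ring
          rw [e1, e2, hzero t]
          ring
        have hAcont : Continuous (fun t =>
            (∑ i, ∑ j, α i j t * (pi i t * w i j t)) + ∑ i, γ i t * pi i t) := by
          apply Continuous.add
          · apply continuous_finset_sum
            intro i _
            apply continuous_finset_sum
            intro j _
            exact (hα_cont i j).mul ((hpic i).mul (hw_cont i j))
          · apply continuous_finset_sum
            intro i _
            exact (hγ_cont i).mul (hpic i)
        have hBcont : Continuous (fun t => ∑ i, p i * γ i t) := by
          apply continuous_finset_sum
          intro i _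
          exact continuous_const.mul (hγ_cont i)
        have hIeq : (∫ t in (0:ℝ)..τ, ((∑ i, ∑ j, α i j t * Qu i j t) + ∑ i, γ i t * ρu i t))
            = (1 - u) * (∫ t in (0:ℝ)..τ,
                ((∑ i, ∑ j, α i j t * (pi i t * w i j t)) + ∑ i, γ i t * pi i t))
              + u * ∫ t in (0:ℝ)..τ, (∑ i, p i * γ i t) := by
          rw [intervalIntegral.integral_congr (g := fun t =>
            (1 - u) * ((∑ i, ∑ j, α i j t * (pi i t * w i j t)) + ∑ i, γ i t * pi i t)
              + u * ∑ i, p i * γ i t) (fun t _ => hintegrand t)]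
          rw [intervalIntegral.integral_add
            ((hAcont.intervalIntegrable 0 τ).const_mul (1 - u))
            ((hBcont.intervalIntegrable 0 τ).const_mul u),
            intervalIntegral.integral_const_mul, intervalIntegral.integral_const_mul]
        have hBint : (∫ t in (0:ℝ)..τ, (∑ i, p i * γ i t)) = 0 := by
          rw [intervalIntegral.integral_finset_sum
            (fun i _ => ((hγ_cont i).intervalIntegrable 0 τ).const_mul (p i))]
          have h1 : ∀ i ∈ (Finset.univ : Finset V),
              (∫ t in (0:ℝ)..τ, p i * γ i t) = p i * ∫ t in (0:ℝ)..τ, γ i t :=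
            fun i _ => intervalIntegral.integral_const_mul _ _
          rw [Finset.sum_congr rfl h1]
          have h2 : (∑ i, p i * ((1 / τ) * (∫ t in (0:ℝ)..τ, γ i t)))
              = (1 / τ) * ∑ i, p i * ∫ t in (0:ℝ)..τ, γ i t := by
            rw [Finset.mul_sum]
            exact Finset.sum_congr rfl fun i _ => by ring
          rw [h2] at hp_γ
          have hτ' : (1:ℝ) / τ ≠ 0 := by positivity
          exact (mul_eq_zero.1 hp_γ).resolve_left hτ'
        rw [hIeq, hBint, hy0]
        ring
    -- bounding the cost
    refine le_trans hfeas ?_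
    have hcoeff : (0:ℝ) ≤ u ^ 2 / (2 * (1 - |u| * D)) := by positivity
    have hcostle : ∀ e ∈ E,
        ENNReal.ofReal (1 / τ) *
          (∫⁻ t in Set.Ioc (0:ℝ) τ, Phi (Qu e.1 e.2 t) (ρu e.1 t * w e.1 e.2 t))
        ≤ ENNReal.ofReal ((1 / τ) *
            ∫ t in Set.Ioc (0:ℝ) τ, u ^ 2 / (2 * (1 - |u| * D)) * G e t) := by
      intro e he
      have hpoint : ∀ t : ℝ, Phi (Qu e.1 e.2 t) (ρu e.1 t * w e.1 e.2 t)
          ≤ ENNReal.ofReal (u ^ 2 / (2 * (1 - |u| * D)) * G e t) := by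
        intro t
        have hQp := hQpos e he t
        have hdn := hden e he t
        have hmpos : 0 < (1 - |u| * D) * (pi e.1 t * w e.1 e.2 t) :=
          mul_pos h1upos hQp
        have hb := Phi_le_quad hmpos (hQu_ge e he t) (hρuw_ge e he t)
        refine le_trans hb (le_of_eq ?_)
        congr 1
        have hdiff : Qu e.1 e.2 t - ρu e.1 t * w e.1 e.2 t =
            u * (cAux E w pi p e.1 e.2 t - p e.1 * w e.1 e.2 t) := by
          simp only [hQu, hρu]
          ring
        have hc : cAux E w pi p e.1 e.2 t - p e.1 * w e.1 e.2 t =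
            -((p e.1 * w e.1 e.2 t - p e.2 * w e.2 e.1 t) * (pi e.1 t * w e.1 e.2 t) /
              (pi e.1 t * w e.1 e.2 t + pi e.2 t * w e.2 e.1 t)) := by
          unfold cAux
          rw [if_pos (hmem' e he)]
          have hinv : (pi e.1 t * w e.1 e.2 t + pi e.2 t * w e.2 e.1 t) *
              (pi e.1 t * w e.1 e.2 t + pi e.2 t * w e.2 e.1 t)⁻¹ = 1 := mul_inv_cancel₀ hdn.ne'
          linear_combination (p e.1 * w e.1 e.2 t) * hinv
        rw [hdiff, hc]
        simp only [hG]
        field_simp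
      have hint : IntegrableOn (fun t => u ^ 2 / (2 * (1 - |u| * D)) * G e t)
          (Set.Ioc (0:ℝ) τ) := by
        exact (continuous_const.mul (hGcont e he)).integrableOn_Ioc
      have hnn : 0 ≤ᵐ[volume.restrict (Set.Ioc (0:ℝ) τ)]
          (fun t => u ^ 2 / (2 * (1 - |u| * D)) * G e t) :=
        Filter.Eventually.of_forall fun t => mul_nonneg hcoeff (hGnonneg e he t)
      calc ENNReal.ofReal (1 / τ) *
            (∫⁻ t in Set.Ioc (0:ℝ) τ, Phi (Qu e.1 e.2 t) (ρu e.1 t * w e.1 e.2 t))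
          ≤ ENNReal.ofReal (1 / τ) *
            (∫⁻ t in Set.Ioc (0:ℝ) τ,
              ENNReal.ofReal (u ^ 2 / (2 * (1 - |u| * D)) * G e t)) :=
            mul_le_mul_right (MeasureTheory.lintegral_mono fun t => hpoint t) _
        _ = ENNReal.ofReal (1 / τ) * ENNReal.ofReal
              (∫ t in Set.Ioc (0:ℝ) τ, u ^ 2 / (2 * (1 - |u| * D)) * G e t) := by
            rw [← MeasureTheory.ofReal_integral_eq_lintegral_ofReal hint hnn]
        _ = ENNReal.ofReal ((1 / τ) *
              ∫ t in Set.Ioc (0:ℝ) τ, u ^ 2 / (2 * (1 - |u| * D)) * G e t) := by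
            rw [← ENNReal.ofReal_mul (by positivity)]
    refine le_trans (Finset.sum_le_sum hcostle) ?_
    rw [← ENNReal.ofReal_sum_of_nonneg (fun e he => ?_)]
    swap
    · apply mul_nonneg (by positivity)
      apply MeasureTheory.setIntegral_nonneg measurableSet_Ioc
      intro t _
      exact mul_nonneg hcoeff (hGnonneg e he t)
    apply ENNReal.ofReal_le_ofReal
    -- now a real computation
    have hIoc : ∀ e ∈ E, (∫ t in Set.Ioc (0:ℝ) τ, u ^ 2 / (2 * (1 - |u| * D)) * G e t)
        = u ^ 2 / (2 * (1 - |u| * D)) * ∫ t in (0:ℝ)..τ, G e t := by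
      intro e he
      rw [← intervalIntegral.integral_of_le hτ.le, intervalIntegral.integral_const_mul]
    rw [Finset.sum_congr rfl fun e he => by rw [hIoc e he]]
    have hsum : ∑ e ∈ E, (1 / τ) * (u ^ 2 / (2 * (1 - |u| * D)) * ∫ t in (0:ℝ)..τ, G e t)
        = u ^ 2 / (2 * (1 - |u| * D)) * ∑ e ∈ E, (1 / τ) * ∫ t in (0:ℝ)..τ, G e t := by
      rw [Finset.mul_sum]
      exact Finset.sum_congr rfl fun e he => by ring
    rw [hsum]
    -- the pairing identity: 2 * T = Cap
    have hpair : ∑ e ∈ E, (1 / τ) * (∫ t in (0:ℝ)..τ, G e t)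
        = ∑ e ∈ E, (1 / τ) * (∫ t in (0:ℝ)..τ, G e.swap t) := by
      apply Finset.sum_nbij' Prod.swap Prod.swap
      · intro e he
        exact hmemswap e he
      · intro e he
        exact hmemswap e he
      · intro e _; exact Prod.swap_swap e
      · intro e _; exact Prod.swap_swap e
      · intro e he; rfl
    have h2T : (∑ e ∈ E, (1 / τ) * (∫ t in (0:ℝ)..τ, G e t))
        + (∑ e ∈ E, (1 / τ) * (∫ t in (0:ℝ)..τ, G e t)) = Cap := by
      nth_rewrite 2 [hpair]
      rw [hCap, ← Finset.sum_add_distrib]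
      refine Finset.sum_congr rfl fun e he => ?_
      rw [← mul_add, ← intervalIntegral.integral_add
        ((hGcont e he).intervalIntegrable 0 τ)
        ((hGcont e.swap (hmemswap e he)).intervalIntegrable 0 τ)]
      congr 1
      apply intervalIntegral.integral_congr
      intro t _
      have hdn := hden e he t
      have hdn2 : (0:ℝ) < pi e.2 t * w e.2 e.1 t + pi e.1 t * w e.1 e.2 t := by linarith
      simp only [hG, Prod.fst_swap, Prod.snd_swap]
      rw [div_add_div _ _ (by positivity) (by positivity), div_eq_div_iff (by positivity) hdn.ne']
      ring
    have hT : ∑ e ∈ E, (1 / τ) * (∫ t in (0:ℝ)..τ, G e t) = Cap / 2 := by linarith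
    rw [hT]
    have hne1 : (1:ℝ) - |u| * D ≠ 0 := h1upos.ne'
    have heq : u ^ 2 / (2 * (1 - |u| * D)) * (Cap / 2) = u ^ 2 * Cap / (4 * (1 - |u| * D)) := by
      rw [div_mul_div_comm]
      congr 1
      ring
    exact le_of_eq heq
  -- now the limsup computation
  have huev : ∀ᶠ y in 𝓝[≠] y0, |1 - y / y0| ≤ δ := by
    have hcont : Tendsto (fun y : ℝ => |1 - y / y0|) (𝓝 y0) (𝓝 0) := by
      have h1 : Tendsto (fun y : ℝ => 1 - y / y0) (𝓝 y0) (𝓝 (1 - y0 / y0)) :=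
        (tendsto_const_nhds.sub ((continuous_id.tendsto y0).div_const y0))
      rw [div_self hy0_ne, sub_self] at h1
      have := h1.abs
      simpa using this
    have := hcont.eventually (eventually_le_nhds hδ)
    exact nhdsWithin_le_nhds this
  have hev : ∀ᶠ y in 𝓝[≠] y0, Iag y / ENNReal.ofReal ((y - y0) ^ 2)
      ≤ ENNReal.ofReal (Cap / (4 * (1 - |1 - y / y0| * D) * y0 ^ 2)) := by
    filter_upwards [huev, self_mem_nhdsWithin] with y hy hne
    set u : ℝ := 1 - y / y0 with hudef
    have hyu : (1 - u) * y0 = y := by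
      simp only [hudef]
      field_simp
      ring
    have hune : u ≠ 0 := by
      intro h
      rw [h, sub_zero, one_mul] at hyu
      exact hne (Set.mem_singleton_iff.2 hyu.symm)
    have hud : |u| * D ≤ 1 / 2 := by
      have := mul_le_mul_of_nonneg_right hy hD0.le
      rw [hδdef] at this
      calc |u| * D ≤ 1 / (2 * D) * D := this
        _ = 1 / 2 := by rw [div_mul_eq_mul_div, one_mul, mul_comm 2 D, ← div_div, div_self hD0.ne']
    have h1u : (1:ℝ) / 2 ≤ 1 - |u| * D := by linarith
    have h1upos : (0:ℝ) < 1 - |u| * D := lt_of_lt_of_le (by norm_num) h1u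
    have h1 := key u hy
    rw [hyu] at h1
    have hy2 : (y - y0) ^ 2 = (u * y0) ^ 2 := by
      rw [← hyu]; ring
    calc Iag y / ENNReal.ofReal ((y - y0) ^ 2)
        ≤ ENNReal.ofReal (u ^ 2 * Cap / (4 * (1 - |u| * D))) /
            ENNReal.ofReal ((u * y0) ^ 2) := by
          rw [hy2]
          exact ENNReal.div_le_div_right h1 _
      _ = ENNReal.ofReal (u ^ 2 * Cap / (4 * (1 - |u| * D)) / (u * y0) ^ 2) := by
          rw [ENNReal.ofReal_div_of_pos (show (0:ℝ) < (u * y0) ^ 2 from by have := mul_ne_zero hune hy0_ne; positivity)]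
      _ = ENNReal.ofReal (Cap / (4 * (1 - |u| * D) * y0 ^ 2)) := by
          congr 1
          field_simp
  have hlim : Tendsto (fun y : ℝ => ENNReal.ofReal (Cap / (4 * (1 - |1 - y / y0| * D) * y0 ^ 2)))
      (𝓝[≠] y0) (𝓝 (ENNReal.ofReal (Cap / (4 * y0 ^ 2)))) := by
    have h1 : Tendsto (fun y : ℝ => Cap / (4 * (1 - |1 - y / y0| * D) * y0 ^ 2))
        (𝓝 y0) (𝓝 (Cap / (4 * y0 ^ 2))) := by
      have h2 : Tendsto (fun y : ℝ => 4 * (1 - |1 - y / y0| * D) * y0 ^ 2)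
          (𝓝 y0) (𝓝 (4 * y0 ^ 2)) := by
        have hc : Continuous (fun y : ℝ => 4 * (1 - |1 - y / y0| * D) * y0 ^ 2) :=
          (continuous_const.mul (continuous_const.sub
            (((continuous_const.sub (continuous_id.div_const y0)).abs).mul
              continuous_const))).mul continuous_const
        have := hc.tendsto y0
        simpa [div_self hy0_ne] using this
      exact Filter.Tendsto.div tendsto_const_nhds h2 (by positivity : (4:ℝ) * y0 ^ 2 ≠ 0)
    exact (ENNReal.continuous_ofReal.tendsto _).comp (h1.mono_left nhdsWithin_le_nhds)
  calc Filter.limsup (fun y : ℝ => Iag y / ENNReal.ofReal ((y - y0) ^ 2)) (𝓝[≠] y0)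
      ≤ Filter.limsup (fun y : ℝ =>
          ENNReal.ofReal (Cap / (4 * (1 - |1 - y / y0| * D) * y0 ^ 2))) (𝓝[≠] y0) :=
        Filter.limsup_le_limsup hev
    _ = ENNReal.ofReal (Cap / (4 * y0 ^ 2)) := hlim.limsup_eq
end
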